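/- arXiv:2402.05088 — 8 statements merged into one kernel-verified Lean document; each statement's English description precedes it below -/
import Mathlib

section
/- For every finite simple graph G without isolated vertices, γ(G) ≤ Δ(G) · ρ(G), where Δ(G) is the maximum degree of G. -/
open SimpleGraph Finset

/-- `X` is a dominating set of `G`: every vertex is in `X` or adjacent to a vertex of `X`. -/
def IsDominatingSet {V : Type*} (G : SimpleGraph V) (X : Finset V) : Prop :=
  ∀ v : V, v ∈ X ∨ ∃ u ∈ X, G.Adj u v

/-- The domination number of `G`. -/
noncomputable def domNum {V : Type*} (G : SimpleGraph V) : ℕ :=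
  sInf {n : ℕ | ∃ X : Finset V, IsDominatingSet G X ∧ X.card = n}

/-- `Y` is a packing of `G`: closed neighborhoods of distinct vertices of `Y` are disjoint
(equivalently, distinct vertices of `Y` are at distance at least 3). -/
def IsPackingSet {V : Type*} (G : SimpleGraph V) (Y : Finset V) : Prop :=
  ∀ u ∈ Y, ∀ v ∈ Y, u ≠ v →
    Disjoint (insert u (G.neighborSet u)) (insert v (G.neighborSet v))

/-- The packing number of `G`. -/
noncomputable def packNum {V : Type*} (G : SimpleGraph V) : ℕ :=
  sSup {n : ℕ | ∃ Y : Finset V, IsPackingSet G Y ∧ Y.card = n}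

theorem domination_le_maxDegree_mul_packing {V : Type*} [Fintype V] [DecidableEq V]
    (G : SimpleGraph V) [DecidableRel G.Adj] (hiso : ∀ v : V, ∃ u : V, G.Adj v u) :
    domNum G ≤ G.maxDegree * packNum G := by
  classical
  set S := {n : ℕ | ∃ Y : Finset V, IsPackingSet G Y ∧ Y.card = n} with hS
  have hbdd : BddAbove S := ⟨Fintype.card V, fun n hn => by
    obtain ⟨Y, _, hc⟩ := hn; exact hc ▸ Finset.card_le_univ Y⟩
  have hne : S.Nonempty :=
    ⟨0, ∅, fun u hu => absurd hu (Finset.notMem_empty u), rfl⟩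
  have hmem : packNum G ∈ S := Nat.sSup_mem hne hbdd
  obtain ⟨Y, hY, hYcard⟩ := hmem
  set X := Y.biUnion (fun y => G.neighborFinset y) with hX
  have hdom : IsDominatingSet G X := by
    intro v
    by_cases h1 : ∃ y ∈ Y, G.Adj y v
    · obtain ⟨y, hy, hadj⟩ := h1
      exact Or.inl (Finset.mem_biUnion.2 ⟨y, hy, (G.mem_neighborFinset y v).2 hadj⟩)
    · by_cases h0 : v ∈ Y
      · obtain ⟨u, hu⟩ := hiso v
        exact Or.inr ⟨u, Finset.mem_biUnion.2 ⟨v, h0, (G.mem_neighborFinset v u).2 hu⟩, hu.symm⟩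
      · by_cases h2 : ∃ y ∈ Y, ∃ w, G.Adj y w ∧ G.Adj w v
        · obtain ⟨y, hy, w, hyw, hwv⟩ := h2
          exact Or.inr ⟨w, Finset.mem_biUnion.2 ⟨y, hy, (G.mem_neighborFinset y w).2 hyw⟩, hwv⟩
        · exfalso
          have key : ∀ y ∈ Y,
              Disjoint (insert v (G.neighborSet v)) (insert y (G.neighborSet y)) := by
            intro y hy
            rw [Set.disjoint_left]
            intro z hz hz'
            rcases Set.mem_insert_iff.1 hz with rfl | hzv
            · rcases Set.mem_insert_iff.1 hz' with rfl | hzy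
              · exact h0 hy
              · exact h1 ⟨y, hy, hzy⟩
            · rcases Set.mem_insert_iff.1 hz' with rfl | hzy
              · exact h1 ⟨z, hy, hzv.symm⟩
              · exact h2 ⟨y, hy, z, hzy, hzv.symm⟩
          have hpack : IsPackingSet G (insert v Y) := by
            intro a ha b hb hab
            rcases Finset.mem_insert.1 ha with rfl | ha' <;>
              rcases Finset.mem_insert.1 hb with rfl | hb'
            · exact absurd rfl hab
            · exact key b hb'
            · exact (key a ha').symm
            · exact hY a ha' b hb' hab
          have hmem' : (insert v Y).card ∈ S := ⟨insert v Y, hpack, rfl⟩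
          have hle := le_csSup hbdd hmem'
          rw [Finset.card_insert_of_notMem h0, hYcard] at hle
          exact absurd hle (by simp [packNum, ← hS])
  have h1 : domNum G ≤ X.card := Nat.sInf_le ⟨X, hdom, rfl⟩
  have h2 : X.card ≤ Y.card * G.maxDegree := by
    calc X.card ≤ ∑ y ∈ Y, (G.neighborFinset y).card := Finset.card_biUnion_le
    _ ≤ Y.card * G.maxDegree := by
        rw [← smul_eq_mul]
        exact Finset.sum_le_card_nsmul Y _ _ (fun y _ => G.degree_le_maxDegree y)
  calc domNum G ≤ Y.card * G.maxDegree := h1.trans h2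
  _ = G.maxDegree * packNum G := by rw [hYcard, mul_comm]
end

section
/- For every connected finite simple graph G with maximum degree at most 2 (i.e., G is a path or a cycle), γ(G) ≤ ρ(G) + 1. -/
open SimpleGraph Finset

section Aux

variable {V : Type*} [Fintype V] [DecidableEq V] {G : SimpleGraph V} [DecidableRel G.Adj]

/-- A vertex with three distinct neighbors contradicts `maxDegree ≤ 2`. -/
lemma three_nbrs (hdeg : G.maxDegree ≤ 2) {x a b c : V}
    (ha : G.Adj x a) (hb : G.Adj x b) (hc : G.Adj x c)
    (hab : a ≠ b) (hac : a ≠ c) (hbc : b ≠ c) : False := by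
  have hsub : ({a, b, c} : Finset V) ⊆ G.neighborFinset x := by
    intro z hz
    simp only [Finset.mem_insert, Finset.mem_singleton] at hz
    rcases hz with rfl | rfl | rfl <;> simp [SimpleGraph.mem_neighborFinset, *]
  have hcard : ({a, b, c} : Finset V).card = 3 := by
    rw [Finset.card_insert_of_notMem (by simp [hab, hac]),
      Finset.card_insert_of_notMem (by simp [hbc]), Finset.card_singleton]
  have h3 : 3 ≤ G.degree x := by
    rw [← hcard]
    exact Finset.card_le_card hsub
  have := G.degree_le_maxDegree x
  omega

lemma extend_chain (hconn : G.Connected) (hdeg : G.maxDegree ≤ 2)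
    (l : List V) (hne : l ≠ []) (hch : l.Chain' G.Adj) (hnd : l.Nodup)
    (w : V) (hw : w ∉ l) :
    ∃ l' : List V, l' ≠ [] ∧ l'.Chain' G.Adj ∧ l'.Nodup ∧ l'.length = l.length + 1 := by
  obtain ⟨p⟩ := hconn.preconnected (l.head hne) w
  obtain ⟨d, -, hdS, hdnS⟩ := p.exists_boundary_dart {v | v ∈ l} (l.head_mem hne) hw
  have hxy : G.Adj d.fst d.snd := d.adj
  have hxl : d.fst ∈ l := hdS
  have hyl : d.snd ∉ l := hdnS
  obtain ⟨⟨i, hi⟩, hx⟩ := List.mem_iff_get.mp hxl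
  rcases Nat.eq_zero_or_pos i with rfl | hipos
  · -- d.fst is the head: extend at the front
    cases l with
    | nil => simp at hne
    | cons a t =>
      have hax : a = d.fst := hx
      refine ⟨d.snd :: a :: t, by simp, ?_, ?_, by simp⟩
      · exact List.isChain_cons_cons.mpr ⟨hax ▸ hxy.symm, hch⟩
      · exact List.nodup_cons.mpr ⟨hyl, hnd⟩
  · by_cases hilast : i = l.length - 1
    · -- d.fst is the last element: extend at the back
      refine ⟨l ++ [d.snd], by simp [hne], ?_, ?_, by simp⟩
      · refine List.isChain_append.mpr ⟨hch, List.isChain_singleton _, ?_⟩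
        intro a ha b hb
        simp only [List.head?_cons, Option.mem_some_iff] at hb
        rw [List.getLast?_eq_getLast hne, Option.mem_some_iff] at ha
        have hlast : l.getLast hne = d.fst := by
          rw [show l.getLast hne = l.get ⟨l.length - 1, by omega⟩ from List.getLast_eq_getElem _]
          have : (⟨l.length - 1, by omega⟩ : Fin l.length) = ⟨i, hi⟩ := by
            simp only [Fin.mk.injEq]; omega
          rw [this]; exact hx
        rw [← ha, ← hb] at *
        exact hlast ▸ hxy
      · rw [List.nodup_append]
        exact ⟨hnd, List.nodup_singleton _, fun a ha b hb => by simp at hb; subst hb; rintro rfl; exact hyl ha⟩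
    · -- d.fst is internal: contradiction with max degree
      exfalso
      obtain ⟨i', rfl⟩ : ∃ i', i = i' + 1 := ⟨i - 1, by omega⟩
      have h1 := List.isChain_iff_getElem.mp hch i' (by omega)
      have h2 := List.isChain_iff_getElem.mp hch (i' + 1) (by omega)
      set a := l.get ⟨i', by omega⟩ with hadef
      set b := l.get ⟨i' + 2, by omega⟩ with hbdef
      have ha' : G.Adj d.fst a := by
        refine hx ▸ ?_
        exact (by convert h1 using 2 <;> rfl : G.Adj a (l.get ⟨i' + 1, hi⟩)).symm
      have hb' : G.Adj d.fst b := by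
        refine hx ▸ ?_
        convert h2 using 2 <;> rfl
      have hab : a ≠ b := by
        intro h
        have := (List.Nodup.get_inj_iff hnd).mp h
        simp at this
      have hay : a ≠ d.snd := fun h => hyl (h ▸ l.get_mem _)
      have hby : b ≠ d.snd := fun h => hyl (h ▸ l.get_mem _)
      exact three_nbrs hdeg ha' hb' hxy hab hay hby

lemma exists_ham (hconn : G.Connected) (hdeg : G.maxDegree ≤ 2) :
    ∃ l : List V, l.Chain' G.Adj ∧ l.Nodup ∧ ∀ v, v ∈ l := by
  have key : ∀ (k : ℕ) (l : List V), l ≠ [] → l.Chain' G.Adj → l.Nodup →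
      Fintype.card V ≤ l.length + k →
      ∃ l' : List V, l'.Chain' G.Adj ∧ l'.Nodup ∧ ∀ v, v ∈ l' := by
    intro k
    induction k with
    | zero =>
      intro l hne hch hnd hlen
      refine ⟨l, hch, hnd, ?_⟩
      have h1 : l.toFinset.card = l.length := List.toFinset_card_of_nodup hnd
      have h2 : l.toFinset = Finset.univ := by
        apply Finset.eq_univ_of_card
        have := hnd.length_le_card
        omega
      intro v
      rw [← List.mem_toFinset, h2]
      exact Finset.mem_univ v
    | succ k ih =>
      intro l hne hch hnd hlen
      by_cases hcov : ∀ v, v ∈ l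
      · exact ⟨l, hch, hnd, hcov⟩
      · push_neg at hcov
        obtain ⟨w, hw⟩ := hcov
        obtain ⟨l', hne', hch', hnd', hlen'⟩ := extend_chain hconn hdeg l hne hch hnd w hw
        exact ih l' hne' hch' hnd' (by omega)
  obtain ⟨v0⟩ := hconn.nonempty
  exact key (Fintype.card V) [v0] (by simp) (List.isChain_singleton _) (by simp) (by simp)

end Aux

theorem domination_le_packing_add_one_of_maxDegree_le_two {V : Type*} [Fintype V] [DecidableEq V]
    (G : SimpleGraph V) [DecidableRel G.Adj] (hconn : G.Connected) (hdeg : G.maxDegree ≤ 2) :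
    domNum G ≤ packNum G + 1 := by
  obtain ⟨l, hch, hnd, hcov⟩ := exists_ham hconn hdeg
  obtain ⟨v0⟩ := hconn.nonempty
  set n := l.length with hn
  set f : ℕ → V := fun i => l.getD i v0 with hfdef
  have hfget : ∀ i (h : i < n), f i = l.get ⟨i, h⟩ := fun i h => List.getD_eq_getElem _ _ h
  have finj : ∀ i j, i < n → j < n → f i = f j → i = j := by
    intro i j hi hj h
    rw [hfget i hi, hfget j hj] at h
    have := (List.Nodup.get_inj_iff hnd).mp h
    simpa using this
  have fadj : ∀ i, i + 1 < n → G.Adj (f i) (f (i + 1)) := by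
    intro i h
    have : G.Adj (l.get ⟨i, by omega⟩) (l.get ⟨i + 1, h⟩) :=
      List.isChain_iff_getElem.mp hch i (by omega)
    rwa [← hfget i (by omega), ← hfget (i + 1) h] at this
  have fsurj : ∀ v : V, ∃ i, ∃ _ : i < n, f i = v := by
    intro v
    obtain ⟨⟨i, hi⟩, h⟩ := List.mem_iff_get.mp (hcov v)
    exact ⟨i, hi, by rw [hfget i hi]; exact h⟩
  have internal : ∀ i, i + 2 < n → ∀ v, G.Adj (f (i + 1)) v → v = f i ∨ v = f (i + 2) := by
    intro i hi v hadj
    by_contra hcon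
    push_neg at hcon
    refine three_nbrs hdeg (fadj i (by omega)).symm (fadj (i + 1) (by omega)) hadj ?_
      (Ne.symm hcon.1) (Ne.symm hcon.2)
    intro h
    have := finj _ _ (by omega) (by omega) h
    omega
  have hnbr : ∀ i j, i < n → j < n → G.Adj (f i) (f j) →
      (j + 1 = i ∨ i + 1 = j ∨ (i = 0 ∧ j + 1 = n) ∨ (j = 0 ∧ i + 1 = n)) := by
    intro i j hi hj hadj
    have hij : i ≠ j := by
      intro h
      exact G.irrefl (h ▸ hadj)
    by_cases hiI : 0 < i ∧ i + 1 < n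
    · obtain ⟨i', rfl⟩ : ∃ i', i = i' + 1 := ⟨i - 1, by omega⟩
      rcases internal i' (by omega) _ hadj with h | h
      · have := finj _ _ hj (by omega) h
        omega
      · have := finj _ _ hj (by omega) h
        omega
    · by_cases hjI : 0 < j ∧ j + 1 < n
      · obtain ⟨j', rfl⟩ : ∃ j', j = j' + 1 := ⟨j - 1, by omega⟩
        rcases internal j' (by omega) _ hadj.symm with h | h
        · have := finj _ _ hi (by omega) h
          omega
        · have := finj _ _ hi (by omega) h
          omega
      · omega
  -- the packing: every third vertex
  have hBdd : BddAbove {k : ℕ | ∃ Y : Finset V, IsPackingSet G Y ∧ Y.card = k} := by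
    refine ⟨Fintype.card V, ?_⟩
    rintro k ⟨Y, -, rfl⟩
    exact le_trans (Finset.card_le_univ Y) (le_of_eq Finset.card_univ)
  set P : Finset V := (Finset.range (n / 3)).image (fun q => f (3 * q)) with hPdef
  have hPcard : P.card = n / 3 := by
    rw [hPdef, Finset.card_image_of_injOn, Finset.card_range]
    intro q hq q' hq' h
    simp only [Finset.mem_coe, Finset.mem_range] at hq hq'
    have := finj _ _ (by omega) (by omega) h
    omega
  have hP : IsPackingSet G P := by
    intro u hu v hv huv
    simp only [hPdef, Finset.mem_image, Finset.mem_range] at hu hv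
    obtain ⟨q, hq, rfl⟩ := hu
    obtain ⟨q', hq', rfl⟩ := hv
    rw [Set.disjoint_left]
    rintro z hz hz'
    have key : ∀ q'', q'' < n / 3 → ∀ z : V,
        z ∈ insert (f (3 * q'')) (G.neighborSet (f (3 * q''))) →
        ∃ j, j < n ∧ f j = z ∧
          (j = 3 * q'' ∨ j + 1 = 3 * q'' ∨ j = 3 * q'' + 1 ∨ (3 * q'' = 0 ∧ j + 1 = n)) := by
      intro q'' hq'' z hz
      rcases Set.mem_insert_iff.mp hz with rfl | hadj
      · exact ⟨3 * q'', by omega, rfl, Or.inl rfl⟩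
      · rw [SimpleGraph.mem_neighborSet] at hadj
        obtain ⟨j, hj, rfl⟩ := fsurj z
        have := hnbr (3 * q'') j (by omega) hj hadj
        exact ⟨j, hj, rfl, by omega⟩
    obtain ⟨j, hj, hjz, hjc⟩ := key q hq z hz
    obtain ⟨j', hj', hjz', hjc'⟩ := key q' hq' z hz'
    have hjj : j = j' := finj _ _ hj hj' (hjz.trans hjz'.symm)
    have hne3 : 3 * q ≠ 3 * q' := fun h => huv (by rw [h])
    omega
  -- the dominating set
  set D : Finset V := ((Finset.range n).filter (fun i => i % 3 = 1)).image f ∪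
      (if n % 3 = 1 then {f (n - 1)} else ∅) with hDdef
  have hD : IsDominatingSet G D := by
    intro v
    obtain ⟨j, hj, rfl⟩ := fsurj v
    have h3 : j % 3 = 0 ∨ j % 3 = 1 ∨ j % 3 = 2 := by omega
    rcases h3 with h | h | h
    · by_cases hlt : j + 1 < n
      · refine Or.inr ⟨f (j + 1), ?_, (fadj j hlt).symm⟩
        refine Finset.mem_union_left _ ?_
        exact Finset.mem_image.mpr ⟨j + 1,
          Finset.mem_filter.mpr ⟨Finset.mem_range.mpr hlt, by omega⟩, rfl⟩
      · refine Or.inl ?_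
        have hmod : n % 3 = 1 := by omega
        refine Finset.mem_union_right _ ?_
        rw [if_pos hmod]
        simp only [Finset.mem_singleton]
        rw [show n - 1 = j by omega]
    · refine Or.inl (Finset.mem_union_left _ ?_)
      exact Finset.mem_image.mpr ⟨j,
        Finset.mem_filter.mpr ⟨Finset.mem_range.mpr hj, h⟩, rfl⟩
    · obtain ⟨j', rfl⟩ : ∃ j', j = j' + 1 := ⟨j - 1, by omega⟩
      refine Or.inr ⟨f j', ?_, fadj j' hj⟩
      refine Finset.mem_union_left _ ?_
      exact Finset.mem_image.mpr ⟨j',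
        Finset.mem_filter.mpr ⟨Finset.mem_range.mpr (by omega), by omega⟩, rfl⟩
  have hDcard : D.card ≤ (n + 1) / 3 + (if n % 3 = 1 then 1 else 0) := by
    refine le_trans (Finset.card_union_le _ _) (Nat.add_le_add ?_ ?_)
    · refine le_trans Finset.card_image_le ?_
      have : ((Finset.range n).filter (fun i => i % 3 = 1)).card ≤
          (Finset.range ((n + 1) / 3)).card := by
        refine Finset.card_le_card_of_injOn (fun i => i / 3) ?_ ?_
        · intro i hi
          simp only [Finset.mem_coe, Finset.mem_filter, Finset.mem_range] at hi ⊢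
          omega
        · intro a ha b hb hab
          simp only [Finset.mem_coe, Finset.mem_filter, Finset.mem_range] at ha hb
          have hab' : a / 3 = b / 3 := hab
          omega
      simpa using this
    · split <;> simp
  have hn1 : 1 ≤ n := by
    obtain ⟨j, hj, -⟩ := fsurj v0
    omega
  have h1 : domNum G ≤ (n + 1) / 3 + (if n % 3 = 1 then 1 else 0) :=
    le_trans (Nat.sInf_le ⟨D, hD, rfl⟩) hDcard
  have h2 : n / 3 ≤ packNum G := le_csSup hBdd ⟨P, hP, hPcard⟩
  have harith : (n + 1) / 3 + (if n % 3 = 1 then 1 else 0) ≤ n / 3 + 1 := by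
    split <;> omega
  omega
end

section
/- Let G be a connected cubic bipartite graph with parts X and Y, let P ⊆ X be a maximum packing among packings in X, let S be the set of vertices of Y at distance ≥ 3 from P, and let T ⊆ S be a maximum packing among packings contained in S. Then every vertex of S \ T has a neighbor at distance exactly 1 from T (i.e., a neighbor in N(T)), and hence |S| ≤ 4|T|. -/
open SimpleGraph Finset

/-- `(X, Y)` is a bipartition of `G`. -/
def IsBipartitionWith {V : Type*} (G : SimpleGraph V) (X Y : Finset V) : Prop :=
  Disjoint X Y ∧ (∀ v : V, v ∈ X ∨ v ∈ Y) ∧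
    ∀ ⦃u v : V⦄, G.Adj u v → (u ∈ X ∧ v ∈ Y) ∨ (u ∈ Y ∧ v ∈ X)

/-- The neighborhood of a set of vertices: all vertices adjacent to some vertex of `P`. -/
def nbhdSet {V : Type*} [DecidableEq V] (G : SimpleGraph V) [Fintype V] [DecidableRel G.Adj]
    (P : Finset V) : Finset V :=
  P.biUnion (fun v => G.neighborFinset v)

theorem second_level_packing_of_bicubic {V : Type*} [Fintype V] [DecidableEq V]
    (G : SimpleGraph V) [DecidableRel G.Adj] (hconn : G.Connected)
    (hcubic : ∀ v : V, G.degree v = 3) (X Y : Finset V) (hbip : IsBipartitionWith G X Y)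
    (P : Finset V) (hPX : P ⊆ X) (hP : IsPackingSet G P)
    (hPmax : ∀ Q : Finset V, Q ⊆ X → IsPackingSet G Q → Q.card ≤ P.card)
    (S : Finset V) (hS : S = Y \ nbhdSet G P)
    (T : Finset V) (hTS : T ⊆ S) (hT : IsPackingSet G T)
    (hTmax : ∀ Q : Finset V, Q ⊆ S → IsPackingSet G Q → Q.card ≤ T.card) :
    (∀ s ∈ S \ T, ∃ w ∈ nbhdSet G T, G.Adj s w) ∧ S.card ≤ 4 * T.card := by
  classical
  obtain ⟨hXY, hcov, hadjXY⟩ := hbip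
  have mem_nbhd : ∀ (A : Finset V) (x : V), x ∈ nbhdSet G A ↔ ∃ a ∈ A, G.Adj a x := by
    intro A x; simp [nbhdSet]
  have hSY : S ⊆ Y := by rw [hS]; exact sdiff_subset
  have hYY : ∀ u v : V, u ∈ Y → v ∈ Y → ¬ G.Adj u v := by
    intro u v hu hv h
    rcases hadjXY h with ⟨h1, _⟩ | ⟨_, h2⟩
    · exact Finset.disjoint_left.mp hXY h1 hu
    · exact Finset.disjoint_left.mp hXY h2 hv
  have hXX : ∀ u v : V, u ∈ X → v ∈ X → ¬ G.Adj u v := by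
    intro u v hu hv h
    rcases hadjXY h with ⟨_, h2⟩ | ⟨h1, _⟩
    · exact Finset.disjoint_left.mp hXY hv h2
    · exact Finset.disjoint_left.mp hXY hu h1
  -- generic insertion lemma for packings
  have hins : ∀ (A : Finset V) (a : V), IsPackingSet G A →
      (∀ b ∈ A, a ≠ b) → (∀ b ∈ A, ¬ G.Adj a b ∧ ¬ G.Adj b a) →
      (∀ x b, b ∈ A → G.Adj a x → ¬ G.Adj b x) → IsPackingSet G (insert a A) := by
    intro A a hA hne hnadj hcom
    have main : ∀ b ∈ A,
        Disjoint (insert a (G.neighborSet a)) (insert b (G.neighborSet b)) := by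
      intro b hb
      rw [Set.disjoint_left]
      intro x hx hx'
      rcases Set.mem_insert_iff.mp hx with rfl | hxa
      · rcases Set.mem_insert_iff.mp hx' with h | hxb
        · exact hne b hb h
        · exact (hnadj b hb).2 hxb
      · rcases Set.mem_insert_iff.mp hx' with h | hxb
        · exact (hnadj x (h ▸ hb)).1 hxa
        · exact hcom x b hb hxa hxb
    intro u hu v hv huv
    rcases Finset.mem_insert.mp hu with rfl | hu' <;>
      rcases Finset.mem_insert.mp hv with rfl | hv'
    · exact absurd rfl huv
    · exact main v hv'
    · exact (main u hu').symm
    · exact hA u hu' v hv' huv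
  -- Part 1
  have part1 : ∀ s ∈ S \ T, ∃ w ∈ nbhdSet G T, G.Adj s w := by
    intro s hs
    by_contra hcon
    push_neg at hcon
    have hsS : s ∈ S := (Finset.mem_sdiff.mp hs).1
    have hsT : s ∉ T := (Finset.mem_sdiff.mp hs).2
    have hpack : IsPackingSet G (insert s T) := by
      apply hins T s hT
      · intro b hb h; exact hsT (h ▸ hb)
      · intro b hb
        exact ⟨hYY s b (hSY hsS) (hSY (hTS hb)), hYY b s (hSY (hTS hb)) (hSY hsS)⟩
      · intro x b hb hsx hbx
        exact hcon x ((mem_nbhd T x).mpr ⟨b, hb, hbx⟩) hsx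
    have hle : (insert s T).card ≤ T.card := by
      apply hTmax _ _ hpack
      intro x hx
      rcases Finset.mem_insert.mp hx with rfl | hx'
      · exact hsS
      · exact hTS hx'
    rw [Finset.card_insert_of_notMem hsT] at hle
    omega
  refine ⟨part1, ?_⟩
  -- Part 2
  set f : V → V := fun s => if h : s ∈ S \ T then (part1 s h).choose else s with hfdef
  have hf1 : ∀ s (h : s ∈ S \ T), f s ∈ nbhdSet G T ∧ G.Adj s (f s) := by
    intro s h
    simp only [hfdef, dif_pos h]
    exact (part1 s h).choose_spec
  have hinj : Set.InjOn f ↑(S \ T) := by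
    intro s1 h1 s2 h2 heq
    by_contra hne
    have h1 : s1 ∈ S \ T := h1
    have h2 : s2 ∈ S \ T := h2
    set w := f s1 with hw
    have hw2 : f s2 = w := heq.symm
    obtain ⟨hwT, hadj1⟩ := hf1 s1 h1
    have hadj2 : G.Adj s2 w := hw2 ▸ (hf1 s2 h2).2
    obtain ⟨t, htT, hadjtw⟩ := (mem_nbhd T w).mp hwT
    have hts1 : t ≠ s1 := fun h => (Finset.mem_sdiff.mp h1).2 (h ▸ htT)
    have hts2 : t ≠ s2 := fun h => (Finset.mem_sdiff.mp h2).2 (h ▸ htT)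
    have hwdeg : (G.neighborFinset w).card = 3 := by
      rw [SimpleGraph.card_neighborFinset_eq_degree]; exact hcubic w
    have hcard3 : ({t, s1, s2} : Finset V).card = 3 := by
      rw [Finset.card_insert_of_notMem (by simp [hts1, hts2]),
        Finset.card_insert_of_notMem (by simp [hne]), Finset.card_singleton]
    have hsub : ({t, s1, s2} : Finset V) ⊆ G.neighborFinset w := by
      intro x hx
      rw [SimpleGraph.mem_neighborFinset]
      rcases Finset.mem_insert.mp hx with rfl | hx
      · exact hadjtw.symm
      rcases Finset.mem_insert.mp hx with rfl | hx
      · exact hadj1.symm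
      · rw [Finset.mem_singleton] at hx; subst hx; exact hadj2.symm
    have heqset : G.neighborFinset w = {t, s1, s2} :=
      (Finset.eq_of_subset_of_card_le hsub (by rw [hwdeg, hcard3])).symm
    have hNwS : ∀ x, G.Adj w x → x ∈ S := by
      intro x hx
      have hx' : x ∈ G.neighborFinset w := by rwa [SimpleGraph.mem_neighborFinset]
      rw [heqset] at hx'
      simp only [Finset.mem_insert, Finset.mem_singleton] at hx'
      rcases hx' with rfl | rfl | rfl
      · exact hTS htT
      · exact (Finset.mem_sdiff.mp h1).1
      · exact (Finset.mem_sdiff.mp h2).1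
    have hwX : w ∈ X := by
      rcases hadjXY hadjtw with ⟨h1', _⟩ | ⟨_, h2'⟩
      · exact absurd (hSY (hTS htT)) (Finset.disjoint_left.mp hXY h1')
      · exact h2'
    have hwP : w ∉ P := by
      intro hwP
      have : t ∈ nbhdSet G P := (mem_nbhd P t).mpr ⟨w, hwP, hadjtw.symm⟩
      have htS := hTS htT
      rw [hS, Finset.mem_sdiff] at htS
      exact htS.2 this
    have hpack : IsPackingSet G (insert w P) := by
      apply hins P w hP
      · intro b hb h; exact hwP (h ▸ hb)
      · intro b hb
        exact ⟨hXX w b hwX (hPX hb), hXX b w (hPX hb) hwX⟩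
      · intro x b hb hwx hbx
        have hxS := hNwS x hwx
        rw [hS, Finset.mem_sdiff] at hxS
        exact hxS.2 ((mem_nbhd P x).mpr ⟨b, hb, hbx⟩)
    have hle : (insert w P).card ≤ P.card := by
      apply hPmax _ _ hpack
      intro x hx
      rcases Finset.mem_insert.mp hx with rfl | hx'
      · exact hwX
      · exact hPX hx'
    rw [Finset.card_insert_of_notMem hwP] at hle
    omega
  have hc1 : (S \ T).card ≤ (nbhdSet G T).card :=
    Finset.card_le_card_of_injOn f (fun a ha => (hf1 a ha).1) hinj
  have hc2 : (nbhdSet G T).card ≤ 3 * T.card := by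
    have hb : nbhdSet G T = T.biUnion (fun v => G.neighborFinset v) := rfl
    rw [hb]
    calc (T.biUnion fun v => G.neighborFinset v).card
        ≤ ∑ t ∈ T, (G.neighborFinset t).card := Finset.card_biUnion_le
      _ = 3 * T.card := by
          simp [SimpleGraph.card_neighborFinset_eq_degree, hcubic, mul_comm]
  have hc3 : (S \ T).card + T.card = S.card := Finset.card_sdiff_add_card_eq_card hTS
  omega
end

section
/- Let G be a maximal outerplanar graph and let G' be its clique graph (vertices are the triangles of G, two triangles adjacent iff they share a vertex). If X' is a dominating set of G' and X = ⋃_{abc ∈ X'} {a, b, c} is the union of the vertex sets of the triangles in X', then X is a dominating set of G; hence γ(G) ≤ 3 γ(G'). -/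
open SimpleGraph Finset

/-- `G` is a maximal outerplanar graph: its vertices can be arranged in a Hamiltonian
cycle (the boundary of the polygon), all chords are pairwise non-crossing, and the number
of edges is `2n - 3` (a full triangulation of the polygon). -/
def IsMaximalOuterplanar {V : Type*} [Fintype V] (G : SimpleGraph V) : Prop :=
  ∃ f : Fin (Fintype.card V) ≃ V,
    (∀ i : Fin (Fintype.card V), G.Adj (f i) (f (finRotate (Fintype.card V) i))) ∧
    (∀ i j k l : Fin (Fintype.card V), G.Adj (f i) (f j) → G.Adj (f k) (f l) →
      ¬ (i < k ∧ k < j ∧ j < l)) ∧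
    G.edgeSet.ncard = 2 * Fintype.card V - 3

/-- The clique graph of `G`: vertices are the triangles of `G`, two triangles being
adjacent iff they are distinct and share a vertex. -/
def cliqueGraph {V : Type*} [DecidableEq V] (G : SimpleGraph V) :
    SimpleGraph {t : Finset V // G.IsNClique 3 t} :=
  SimpleGraph.fromRel (fun s t => (s.1 ∩ t.1).Nonempty)


lemma finRotate_mk (n x : ℕ) (h : x + 1 < n) :
    finRotate n ⟨x, by omega⟩ = ⟨x + 1, h⟩ := by
  cases n with
  | zero => omega
  | succ m =>
    have hx : x < m := by omega
    have := finRotate_of_lt hx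
    convert this using 2
lemma finRotate_mk_last (n : ℕ) (h : 1 ≤ n) :
    finRotate n ⟨n - 1, by omega⟩ = ⟨0, by omega⟩ := by
  cases n with
  | zero => omega
  | succ m =>
    have := finRotate_last' (n := m)
    convert this using 2
    simp

open scoped Classical in
noncomputable def cnt (n : ℕ) (E : ℕ → ℕ → Prop) (a b : ℕ) : ℕ :=
  ((range n ×ˢ range n).filter fun p => a ≤ p.1 ∧ p.2 ≤ b ∧ E p.1 p.2).card

open scoped Classical in
lemma cnt_key (n : ℕ) (E : ℕ → ℕ → Prop)
    (hbound : ∀ x y, E x y → x < y ∧ y < n)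
    (hconsec : ∀ x, x + 1 < n → E x (x + 1))
    (hncross : ∀ i j k l, E i j → E k l → ¬ (i < k ∧ k < j ∧ j < l)) :
    ∀ d a b, b - a = d → a < b → b < n →
      (cnt n E a b ≤ 2 * (b - a) - 1) ∧
      (¬ E a b → cnt n E a b ≤ 2 * (b - a) - 2) ∧
      (∀ i j, E i j → a ≤ i → j ≤ b → i + 2 ≤ j →
        (¬ ∃ k, i < k ∧ k < j ∧ E i k ∧ E k j) → cnt n E a b ≤ 2 * (b - a) - 2) := by
  intro d
  induction d using Nat.strong_induction_on with
  | _ d IH =>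
  intro a b hd hab hbn
  by_cases hb1 : b = a + 1
  · subst hb1
    have hsub : ((range n ×ˢ range n).filter fun p => a ≤ p.1 ∧ p.2 ≤ a + 1 ∧ E p.1 p.2)
        ⊆ {(a, a + 1)} := by
      intro p hp
      simp only [mem_filter, mem_product, mem_range] at hp
      obtain ⟨⟨_, _⟩, h1, h2, h3⟩ := hp
      obtain ⟨hlt, _⟩ := hbound _ _ h3
      simp only [mem_singleton]
      have : p.1 = a ∧ p.2 = a + 1 := by omega
      exact Prod.ext this.1 this.2
    refine ⟨?_, ?_, ?_⟩
    · have := card_le_card hsub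
      simp at this
      unfold cnt
      omega
    · intro hE
      have : ((range n ×ˢ range n).filter fun p => a ≤ p.1 ∧ p.2 ≤ a + 1 ∧ E p.1 p.2) = ∅ := by
        refine eq_empty_of_forall_notMem fun p hp => ?_
        have := hsub hp
        simp only [mem_singleton] at this
        subst this
        simp only [mem_filter] at hp
        exact hE hp.2.2.2
      unfold cnt
      rw [this]
      simp
    · intro i j hij hai hjb h2 _
      obtain ⟨hlt, _⟩ := hbound _ _ hij
      omega
  · -- main step : a + 2 ≤ b
    have hab2 : a + 2 ≤ b := by omega
    set S := (range n).filter (fun x => a < x ∧ x < b ∧ E a x) with hS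
    have hSne : S.Nonempty := by
      refine ⟨a + 1, ?_⟩
      simp only [hS, mem_filter, mem_range]
      have := hconsec a (by omega)
      exact ⟨by omega, by omega, by omega, this⟩
    set t := S.max' hSne with htdef
    have htS : t ∈ S := S.max'_mem hSne
    simp only [hS, mem_filter, mem_range] at htS
    obtain ⟨htn, hat, htb, hEat⟩ := htS
    have htmax : ∀ x, a < x → x < b → E a x → x ≤ t := by
      intro x hx1 hx2 hx3
      refine S.le_max' x ?_
      simp only [hS, mem_filter, mem_range]
      exact ⟨by omega, hx1, hx2, hx3⟩
    -- partition
    have hpart : ∀ p : ℕ × ℕ, a ≤ p.1 → p.2 ≤ b → E p.1 p.2 →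
        (a ≤ p.1 ∧ p.2 ≤ t) ∨ (t ≤ p.1 ∧ p.2 ≤ b) ∨ p = (a, b) := by
      intro p hp1 hp2 hpE
      obtain ⟨hplt, hpn⟩ := hbound _ _ hpE
      by_cases h2t : p.2 ≤ t
      · exact Or.inl ⟨hp1, h2t⟩
      push_neg at h2t
      by_cases hpa : p.1 = a
      · by_cases hpb : p.2 = b
        · exact Or.inr (Or.inr (Prod.ext hpa hpb))
        · exfalso
          have := htmax p.2 (by omega) (by omega) (hpa ▸ hpE)
          omega
      · have hap1 : a < p.1 := by omega
        by_cases hpt : p.1 < t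
        · exfalso
          exact hncross a t p.1 p.2 hEat hpE ⟨hap1, hpt, h2t⟩
        · exact Or.inr (Or.inl ⟨by omega, hp2⟩)
    have hsub : ((range n ×ˢ range n).filter fun p => a ≤ p.1 ∧ p.2 ≤ b ∧ E p.1 p.2) ⊆
        (((range n ×ˢ range n).filter fun p => a ≤ p.1 ∧ p.2 ≤ t ∧ E p.1 p.2) ∪
         ((range n ×ˢ range n).filter fun p => t ≤ p.1 ∧ p.2 ≤ b ∧ E p.1 p.2)) ∪ {(a, b)} := by
      intro p hp
      simp only [mem_filter, mem_product, mem_range] at hp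
      obtain ⟨hpr, h1, h2, h3⟩ := hp
      rcases hpart p h1 h2 h3 with h | h | h
      · refine mem_union_left _ (mem_union_left _ ?_)
        simp only [mem_filter, mem_product, mem_range]
        exact ⟨hpr, h.1, h.2, h3⟩
      · refine mem_union_left _ (mem_union_right _ ?_)
        simp only [mem_filter, mem_product, mem_range]
        exact ⟨hpr, h.1, h.2, h3⟩
      · exact mem_union_right _ (by simp [h])
    have hcle : cnt n E a b ≤ cnt n E a t + cnt n E t b + 1 := by
      have := card_le_card hsub
      calc cnt n E a b ≤ _ := this
        _ ≤ _ + ({(a,b)} : Finset (ℕ × ℕ)).card := card_union_le _ _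
        _ ≤ (cnt n E a t + cnt n E t b) + 1 := by
            simp only [card_singleton]
            gcongr
            exact card_union_le _ _
    -- sharper bound when (a,b) not counted
    have hcle' : ¬ E a b → cnt n E a b ≤ cnt n E a t + cnt n E t b := by
      intro hnab
      have hsub2 : ((range n ×ˢ range n).filter fun p => a ≤ p.1 ∧ p.2 ≤ b ∧ E p.1 p.2) ⊆
          (((range n ×ˢ range n).filter fun p => a ≤ p.1 ∧ p.2 ≤ t ∧ E p.1 p.2) ∪
           ((range n ×ˢ range n).filter fun p => t ≤ p.1 ∧ p.2 ≤ b ∧ E p.1 p.2)) := by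
        intro p hp
        have h0 := hp
        simp only [mem_filter, mem_product, mem_range] at hp
        obtain ⟨hpr, h1, h2, h3⟩ := hp
        rcases Finset.mem_union.mp (hsub h0) with h | h
        · exact h
        · exfalso
          simp only [mem_singleton] at h
          subst h
          exact hnab h3
      calc cnt n E a b ≤ _ := card_le_card hsub2
        _ ≤ _ := card_union_le _ _
    have IHat := IH (t - a) (by omega) a t rfl hat (by omega)
    have IHtb := IH (b - t) (by omega) t b rfl htb hbn
    refine ⟨by omega, fun hnab => by have := hcle' hnab; omega, ?_⟩
    intro i j hEij hai hjb h2 hnosplit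
    obtain ⟨hijlt, hjn⟩ := hbound _ _ hEij
    by_cases hjt : j ≤ t
    · have := IHat.2.2 i j hEij hai hjt h2 hnosplit
      omega
    · by_cases hti : t ≤ i
      · have := IHtb.2.2 i j hEij hti hjb h2 hnosplit
        omega
      · -- i < t < j ; forces (i,j) = (a,b)
        push_neg at hjt hti
        have hia : i = a := by
          by_contra hne
          have hai' : a < i := by omega
          exact hncross a t i j hEat hEij ⟨hai', hti, hjt⟩
        have hjb' : j = b := by
          by_contra hne
          have := htmax j (by omega) (by omega) (by rwa [hia] at hEij)
          omega
        have hnEtb : ¬ E t b := fun h =>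
          hnosplit ⟨t, by omega, by omega, by rw [hia]; exact hEat, by rw [hjb']; exact h⟩
        have := IHtb.2.1 hnEtb
        omega

lemma split_exists (n : ℕ) (E : ℕ → ℕ → Prop)
    (hbound : ∀ x y, E x y → x < y ∧ y < n)
    (hconsec : ∀ x, x + 1 < n → E x (x + 1))
    (hncross : ∀ i j k l, E i j → E k l → ¬ (i < k ∧ k < j ∧ j < l))
    (hn : 3 ≤ n) (htot : 2 * n - 3 ≤ cnt n E 0 (n - 1)) :
    ∀ i j, E i j → i + 2 ≤ j → ∃ k, i < k ∧ k < j ∧ E i k ∧ E k j := by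
  intro i j hij h2
  by_contra hno
  obtain ⟨hlt, hjn⟩ := hbound _ _ hij
  have := (cnt_key n E hbound hconsec hncross (n - 1 - 0) 0 (n - 1) rfl (by omega)
    (by omega)).2.2 i j hij (by omega) (by omega) h2 hno
  omega

lemma triangle_exists (n : ℕ) (E : ℕ → ℕ → Prop)
    (hbound : ∀ x y, E x y → x < y ∧ y < n)
    (hsplit : ∀ i j, E i j → i + 2 ≤ j → ∃ k, i < k ∧ k < j ∧ E i k ∧ E k j) :
    ∀ d i j m, j - i = d → E i j → i + 2 ≤ j → i ≤ m → m ≤ j →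
      ∃ x y z, E x y ∧ E x z ∧ E y z ∧ (m = x ∨ m = y ∨ m = z) := by
  intro d
  induction d using Nat.strong_induction_on with
  | _ d IH =>
  intro i j m hd hij h2 him hmj
  obtain ⟨k, hik, hkj, hEik, hEkj⟩ := hsplit i j hij h2
  by_cases hmk : m ≤ k
  · by_cases hk2 : i + 2 ≤ k
    · exact IH (k - i) (by omega) i k m rfl hEik hk2 him hmk
    · exact ⟨i, k, j, hEik, hij, hEkj, by omega⟩
  · by_cases hk2 : k + 2 ≤ j
    · exact IH (j - k) (by omega) k j m rfl hEkj hk2 (by omega) hmj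
    · exact ⟨i, k, j, hEik, hij, hEkj, by omega⟩

theorem mop_cliqueGraph_domination {V : Type*} [Fintype V] [DecidableEq V]
    (G : SimpleGraph V) (hmop : IsMaximalOuterplanar G) (hn : 3 ≤ Fintype.card V) :
    (∀ X' : Finset {t : Finset V // G.IsNClique 3 t},
        IsDominatingSet (cliqueGraph G) X' →
        IsDominatingSet G (X'.biUnion (fun t => t.1))) ∧
      domNum G ≤ 3 * domNum (cliqueGraph G) := by
  classical
  set n := Fintype.card V with hnV
  obtain ⟨f, hcyc, hcross, hcount⟩ := hmop
  have hn3 : 3 ≤ n := hn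
  have hn0 : 0 < n := by omega
  set E : ℕ → ℕ → Prop :=
    fun x y => ∃ (hx : x < n) (hy : y < n), x < y ∧ G.Adj (f ⟨x, hx⟩) (f ⟨y, hy⟩) with hEdef
  have hbound : ∀ x y, E x y → x < y ∧ y < n := by
    rintro x y ⟨hx, hy, hlt, -⟩; exact ⟨hlt, hy⟩
  have hconsec : ∀ x, x + 1 < n → E x (x + 1) := by
    intro x hx1
    refine ⟨by omega, hx1, by omega, ?_⟩
    have := hcyc ⟨x, by omega⟩
    rwa [finRotate_mk n x hx1] at this
  have hncross : ∀ i j k l, E i j → E k l → ¬ (i < k ∧ k < j ∧ j < l) := by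
    rintro i j k l ⟨hi, hj, hij, hadj1⟩ ⟨hk, hl, hkl, hadj2⟩ ⟨h1, h2, h3⟩
    exact hcross ⟨i, hi⟩ ⟨j, hj⟩ ⟨k, hk⟩ ⟨l, hl⟩ hadj1 hadj2
      ⟨Fin.mk_lt_mk.mpr h1, Fin.mk_lt_mk.mpr h2, Fin.mk_lt_mk.mpr h3⟩
  have hE0 : E 0 (n - 1) := by
    refine ⟨by omega, by omega, by omega, ?_⟩
    have := hcyc ⟨n - 1, by omega⟩
    rw [finRotate_mk_last n (by omega)] at this
    exact this.symm
  -- the total count equals the number of edges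
  have htot : cnt n E 0 (n - 1) = G.edgeSet.ncard := by
    rw [Set.ncard_eq_toFinset_card']
    unfold cnt
    refine Finset.card_bij
      (fun p _ => s(f ⟨p.1 % n, Nat.mod_lt _ hn0⟩, f ⟨p.2 % n, Nat.mod_lt _ hn0⟩))
      ?_ ?_ ?_
    · rintro p hp
      simp only [mem_filter, mem_product, mem_range] at hp
      obtain ⟨⟨h1n, h2n⟩, -, -, hx, hy, hlt, hadj⟩ := hp
      rw [Set.mem_toFinset]
      have e1 : (⟨p.1 % n, Nat.mod_lt _ hn0⟩ : Fin n) = ⟨p.1, hx⟩ :=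
        Fin.ext (Nat.mod_eq_of_lt hx)
      have e2 : (⟨p.2 % n, Nat.mod_lt _ hn0⟩ : Fin n) = ⟨p.2, hy⟩ :=
        Fin.ext (Nat.mod_eq_of_lt hy)
      rw [e1, e2]
      exact hadj
    · rintro p hp q hq heq
      simp only [mem_filter, mem_product, mem_range] at hp hq
      obtain ⟨⟨hp1, hp2⟩, -, -, hpx, hpy, hplt, -⟩ := hp
      obtain ⟨⟨hq1, hq2⟩, -, -, hqx, hqy, hqlt, -⟩ := hq
      rw [Sym2.eq_iff] at heq
      have hmod : ∀ x (h : x < n), x % n = x := fun x h => Nat.mod_eq_of_lt h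
      rcases heq with ⟨ha, hb⟩ | ⟨ha, hb⟩
      · have h1 := f.injective ha
        have h2 := f.injective hb
        rw [Fin.mk.injEq] at h1 h2
        rw [hmod _ hpx, hmod _ hqx] at h1
        rw [hmod _ hpy, hmod _ hqy] at h2
        exact Prod.ext h1 h2
      · have h1 := f.injective ha
        have h2 := f.injective hb
        rw [Fin.mk.injEq] at h1 h2
        rw [hmod _ hpx, hmod _ hqy] at h1
        rw [hmod _ hpy, hmod _ hqx] at h2
        exfalso; omega
    · intro b hb
      rw [Set.mem_toFinset] at hb
      induction b using Sym2.ind with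
      | _ u v =>
        rw [mem_edgeSet] at hb
        have hne : f.symm u ≠ f.symm v := fun h => hb.ne (by simpa using congrArg f h)
        have hne' : ((f.symm u : Fin n) : ℕ) ≠ ((f.symm v : Fin n) : ℕ) :=
          fun h => hne (Fin.ext h)
        have hfu : f ⟨((f.symm u : Fin n) : ℕ), (f.symm u).isLt⟩ = u := by
          simp
        have hfv : f ⟨((f.symm v : Fin n) : ℕ), (f.symm v).isLt⟩ = v := by
          simp
        rcases lt_or_gt_of_ne hne' with hlt | hlt
        · refine ⟨(((f.symm u : Fin n) : ℕ), ((f.symm v : Fin n) : ℕ)), ?_, ?_⟩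
          · simp only [mem_filter, mem_product, mem_range]
            refine ⟨⟨(f.symm u).isLt, (f.symm v).isLt⟩, by omega,
              by have := (f.symm v).isLt; omega,
              (f.symm u).isLt, (f.symm v).isLt, hlt, ?_⟩
            rw [hfu, hfv]; exact hb
          · simp only []
            have e1 : (⟨((f.symm u : Fin n) : ℕ) % n, Nat.mod_lt _ hn0⟩ : Fin n) = f.symm u :=
              Fin.ext (Nat.mod_eq_of_lt (f.symm u).isLt)
            have e2 : (⟨((f.symm v : Fin n) : ℕ) % n, Nat.mod_lt _ hn0⟩ : Fin n) = f.symm v :=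
              Fin.ext (Nat.mod_eq_of_lt (f.symm v).isLt)
            rw [e1, e2]
            simp
        · refine ⟨(((f.symm v : Fin n) : ℕ), ((f.symm u : Fin n) : ℕ)), ?_, ?_⟩
          · simp only [mem_filter, mem_product, mem_range]
            refine ⟨⟨(f.symm v).isLt, (f.symm u).isLt⟩, by omega,
              by have := (f.symm u).isLt; omega,
              (f.symm v).isLt, (f.symm u).isLt, hlt, ?_⟩
            rw [hfu, hfv]; exact hb.symm
          · simp only []
            have e1 : (⟨((f.symm v : Fin n) : ℕ) % n, Nat.mod_lt _ hn0⟩ : Fin n) = f.symm v :=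
              Fin.ext (Nat.mod_eq_of_lt (f.symm v).isLt)
            have e2 : (⟨((f.symm u : Fin n) : ℕ) % n, Nat.mod_lt _ hn0⟩ : Fin n) = f.symm u :=
              Fin.ext (Nat.mod_eq_of_lt (f.symm u).isLt)
            rw [e1, e2]
            rw [Sym2.eq_swap]
            simp
  have hsplit := split_exists n E hbound hconsec hncross hn3 (by rw [htot, hcount])
  -- every vertex lies in a triangle
  have htri : ∀ v : V, ∃ t : Finset V, G.IsNClique 3 t ∧ v ∈ t := by
    intro v
    obtain ⟨x, y, z, hxy, hxz, hyz, hm⟩ := triangle_exists n E hbound hsplit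
      ((n - 1) - 0) 0 (n - 1) ((f.symm v : Fin n) : ℕ) rfl hE0 (by omega) (by omega)
      (by have := (f.symm v).isLt; omega)
    obtain ⟨hx, hy, hxy', haxy⟩ := hxy
    obtain ⟨hx2, hz, hxz', haxz⟩ := hxz
    obtain ⟨hy', hz', hyz', hayz⟩ := hyz
    refine ⟨{f ⟨x, hx⟩, f ⟨y, hy⟩, f ⟨z, hz⟩}, is3Clique_triple_iff.mpr ⟨haxy, haxz, hayz⟩, ?_⟩
    rcases hm with h | h | h
    · have : f ⟨x, hx⟩ = v := by
        rw [show (⟨x, hx⟩ : Fin n) = f.symm v from Fin.ext h.symm]; simp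
      rw [← this]; exact mem_insert_self _ _
    · have : f ⟨y, hy⟩ = v := by
        rw [show (⟨y, hy⟩ : Fin n) = f.symm v from Fin.ext h.symm]; simp
      rw [← this]; exact mem_insert_of_mem (mem_insert_self _ _)
    · have : f ⟨z, hz⟩ = v := by
        rw [show (⟨z, hz⟩ : Fin n) = f.symm v from Fin.ext h.symm]; simp
      rw [← this]; exact mem_insert_of_mem (mem_insert_of_mem (mem_singleton_self _))
  have part1 : ∀ X' : Finset {t : Finset V // G.IsNClique 3 t},
      IsDominatingSet (cliqueGraph G) X' →
      IsDominatingSet G (X'.biUnion (fun t => t.1)) := by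
    intro X' hX' v
    obtain ⟨t, ht, hvt⟩ := htri v
    rcases hX' ⟨t, ht⟩ with h | ⟨s, hs, hadj⟩
    · exact Or.inl (mem_biUnion.mpr ⟨⟨t, ht⟩, h, hvt⟩)
    · simp only [cliqueGraph, fromRel_adj] at hadj
      obtain ⟨hne, hcap⟩ := hadj
      have hcap' : (s.1 ∩ t).Nonempty := by
        rcases hcap with h | h
        · exact h
        · rwa [inter_comm] at h
      obtain ⟨u, hu⟩ := hcap'
      rw [mem_inter] at hu
      by_cases huv : u = v
      · exact Or.inl (mem_biUnion.mpr ⟨s, hs, huv ▸ hu.1⟩)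
      · exact Or.inr ⟨u, mem_biUnion.mpr ⟨s, hs, hu.1⟩,
          ht.1 (mem_coe.mpr hu.2) (mem_coe.mpr hvt) huv⟩
  refine ⟨part1, ?_⟩
  have hne : {k : ℕ | ∃ X' : Finset {t : Finset V // G.IsNClique 3 t},
      IsDominatingSet (cliqueGraph G) X' ∧ X'.card = k}.Nonempty :=
    ⟨_, univ, fun v => Or.inl (mem_univ v), rfl⟩
  obtain ⟨X', hX'dom, hX'card⟩ := Nat.sInf_mem hne
  have hXdom := part1 X' hX'dom
  refine le_trans (Nat.sInf_le ⟨_, hXdom, rfl⟩) ?_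
  calc (X'.biUnion fun t => t.1).card ≤ ∑ t ∈ X', t.1.card := card_biUnion_le
    _ = ∑ _t ∈ X', 3 := sum_congr rfl (fun t _ => t.2.2)
    _ = 3 * X'.card := by rw [sum_const, smul_eq_mul, mul_comm]
    _ = 3 * domNum (cliqueGraph G) := by rw [hX'card]; rfl
end

section
/- Let G be a maximal outerplanar graph, G' its clique graph (vertices are triangles of G, adjacent iff they share a vertex). Then ρ(G) ≥ ρ(G'): for any packing Z of G', there exists a packing of G of size |Z|. -/
open SimpleGraph Finset

namespace MopAux

/-! ### Counting noncrossing edge sets -/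

def cnt (E : Finset (ℕ × ℕ)) (i j : ℕ) : ℕ :=
  (E.filter (fun p => i ≤ p.1 ∧ p.2 ≤ j)).card

def mem2 (E : Finset (ℕ × ℕ)) (x y : ℕ) : Prop := (x, y) ∈ E ∨ (y, x) ∈ E

variable {E : Finset (ℕ × ℕ)}

lemma boundB (hlt : ∀ p ∈ E, p.1 < p.2)
    (hnc : ∀ p ∈ E, ∀ q ∈ E, ¬(p.1 < q.1 ∧ q.1 < p.2 ∧ p.2 < q.2)) :
    ∀ d i j, j - i = d → i < j → cnt E i j ≤ 2 * (j - i) - 1 := by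
  intro d
  induction d using Nat.strong_induction_on with
  | _ d IH =>
  intro i j hd hij
  by_cases h1 : j = i + 1
  · subst h1
    have hsub : E.filter (fun p => i ≤ p.1 ∧ p.2 ≤ i + 1) ⊆ {(i, i + 1)} := by
      intro p hp
      simp only [mem_filter] at hp
      have := hlt p hp.1
      have hp1 : p.1 = i := by omega
      have hp2 : p.2 = i + 1 := by omega
      simp [Prod.ext_iff, hp1, hp2]
    have := Finset.card_le_card hsub
    simp only [Finset.card_singleton] at this
    unfold cnt; omega
  · have hd2 : 2 ≤ j - i := by omega
    set K := (E.filter (fun p => p.1 = i ∧ p.2 < j)).image Prod.snd with hKdef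
    by_cases hK : K.Nonempty
    · set k := K.max' hK with hkdef
      have hkK : k ∈ K := K.max'_mem hK
      obtain ⟨p, hp, hpk⟩ := Finset.mem_image.mp hkK
      simp only [mem_filter] at hp
      have hpik : p = (i, k) := Prod.ext hp.2.1 hpk
      have hkE : (i, k) ∈ E := hpik ▸ hp.1
      have hik : i < k := by have := hlt _ hkE; simpa using this
      have hkj : k < j := by rw [← hpk]; exact hp.2.2
      have kmax : ∀ y, (i, y) ∈ E → y < j → y ≤ k := by
        intro y hy hyj
        exact K.le_max' y (Finset.mem_image.mpr ⟨(i, y), Finset.mem_filter.mpr ⟨hy, rfl, hyj⟩, rfl⟩)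
      have hsub : E.filter (fun p => i ≤ p.1 ∧ p.2 ≤ j) ⊆
          (E.filter (fun p => i ≤ p.1 ∧ p.2 ≤ k)) ∪ (E.filter (fun p => k ≤ p.1 ∧ p.2 ≤ j))
            ∪ {(i, j)} := by
        intro q hq
        simp only [mem_filter, mem_union, mem_singleton] at *
        obtain ⟨hqE, hqi, hqj⟩ := hq
        have hqlt := hlt q hqE
        by_cases h2 : q.2 ≤ k
        · exact Or.inl (Or.inl ⟨hqE, hqi, h2⟩)
        by_cases h3 : k ≤ q.1
        · exact Or.inl (Or.inr ⟨hqE, h3, hqj⟩)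
        push_neg at h2 h3
        by_cases h4 : q.1 = i
        · by_cases h5 : q.2 = j
          · exact Or.inr (Prod.ext h4 h5)
          · have hqE' : (i, q.2) ∈ E := by
              have : (i, q.2) = q := Prod.ext h4.symm rfl
              rw [this]; exact hqE
            have := kmax q.2 hqE' (by omega)
            omega
        · exact absurd ⟨by omega, h3, h2⟩ (hnc (i, k) hkE q hqE)
      have hcard : cnt E i j ≤ cnt E i k + cnt E k j + 1 := by
        unfold cnt
        calc (E.filter (fun p => i ≤ p.1 ∧ p.2 ≤ j)).card
            ≤ ((E.filter (fun p => i ≤ p.1 ∧ p.2 ≤ k)) ∪ (E.filter (fun p => k ≤ p.1 ∧ p.2 ≤ j))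
                ∪ {(i, j)}).card := Finset.card_le_card hsub
          _ ≤ ((E.filter (fun p => i ≤ p.1 ∧ p.2 ≤ k)) ∪
                (E.filter (fun p => k ≤ p.1 ∧ p.2 ≤ j))).card + 1 := by
              refine le_trans (Finset.card_union_le _ _) ?_; simp
          _ ≤ (E.filter (fun p => i ≤ p.1 ∧ p.2 ≤ k)).card +
                (E.filter (fun p => k ≤ p.1 ∧ p.2 ≤ j)).card + 1 := by
              have := Finset.card_union_le (E.filter (fun p => i ≤ p.1 ∧ p.2 ≤ k))
                (E.filter (fun p => k ≤ p.1 ∧ p.2 ≤ j))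
              omega
      have hIH1 : cnt E i k ≤ 2 * (k - i) - 1 := IH (k - i) (by omega) i k rfl hik
      have hIH2 : cnt E k j ≤ 2 * (j - k) - 1 := IH (j - k) (by omega) k j rfl hkj
      omega
    · rw [Finset.not_nonempty_iff_eq_empty] at hK
      have hsub : E.filter (fun p => i ≤ p.1 ∧ p.2 ≤ j) ⊆
          insert (i, j) (E.filter (fun p => i + 1 ≤ p.1 ∧ p.2 ≤ j)) := by
        intro q hq
        simp only [mem_filter, mem_insert] at *
        obtain ⟨hqE, hqi, hqj⟩ := hq
        by_cases h4 : q.1 = i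
        · by_cases h5 : q.2 = j
          · exact Or.inl (Prod.ext h4 h5)
          · exfalso
            have hqE' : (i, q.2) ∈ E := by
              have : (i, q.2) = q := Prod.ext h4.symm rfl
              rw [this]; exact hqE
            have : q.2 ∈ K := Finset.mem_image.mpr
              ⟨(i, q.2), Finset.mem_filter.mpr ⟨hqE', rfl, by omega⟩, rfl⟩
            simp [hK] at this
        · exact Or.inr ⟨hqE, by omega, hqj⟩
      have hcard : cnt E i j ≤ cnt E (i + 1) j + 1 := by
        unfold cnt
        have := Finset.card_le_card hsub
        have h2 := Finset.card_insert_le (i, j) (E.filter (fun p => i + 1 ≤ p.1 ∧ p.2 ≤ j))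
        omega
      have hIH1 : cnt E (i + 1) j ≤ 2 * (j - (i + 1)) - 1 := IH (j - (i + 1)) (by omega) _ _ rfl (by omega)
      omega

lemma splitD (hlt : ∀ p ∈ E, p.1 < p.2)
    (hnc : ∀ p ∈ E, ∀ q ∈ E, ¬(p.1 < q.1 ∧ q.1 < p.2 ∧ p.2 < q.2))
    (hB : ∀ d i j, j - i = d → i < j → cnt E i j ≤ 2 * (j - i) - 1) :
    ∀ d i j, j - i = d → i < j → cnt E i j = 2 * (j - i) - 1 →
      (i, j) ∈ E ∧ (i + 1 < j → ∃ k, i < k ∧ k < j ∧ (i, k) ∈ E ∧ (k, j) ∈ E ∧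
        cnt E i k = 2 * (k - i) - 1 ∧ cnt E k j = 2 * (j - k) - 1) := by
  intro d
  induction d using Nat.strong_induction_on with
  | _ d IH =>
  intro i j hd hij hgood
  by_cases h1 : j = i + 1
  · subst h1
    constructor
    · have hsub : E.filter (fun p => i ≤ p.1 ∧ p.2 ≤ i + 1) ⊆ {(i, i + 1)} := by
        intro p hp
        simp only [mem_filter] at hp
        have := hlt p hp.1
        have hp1 : p.1 = i := by omega
        have hp2 : p.2 = i + 1 := by omega
        simp [Prod.ext_iff, hp1, hp2]
      have hone : cnt E i (i + 1) = 1 := by unfold cnt at hgood ⊢; omega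
      have hge : ({(i, i + 1)} : Finset (ℕ × ℕ)).card ≤
          (E.filter (fun p => i ≤ p.1 ∧ p.2 ≤ i + 1)).card := by
        unfold cnt at hone; simp [hone]
      have := Finset.eq_of_subset_of_card_le hsub hge
      have hmem : (i, i + 1) ∈ E.filter (fun p => i ≤ p.1 ∧ p.2 ≤ i + 1) := by
        rw [this]; simp
      exact (Finset.mem_filter.mp hmem).1
    · omega
  · have hd2 : 2 ≤ j - i := by omega
    set K := (E.filter (fun p => p.1 = i ∧ p.2 < j)).image Prod.snd with hKdef
    by_cases hK : K.Nonempty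
    · set k := K.max' hK with hkdef
      have hkK : k ∈ K := K.max'_mem hK
      obtain ⟨p, hp, hpk⟩ := Finset.mem_image.mp hkK
      simp only [mem_filter] at hp
      have hpik : p = (i, k) := Prod.ext hp.2.1 hpk
      have hkE : (i, k) ∈ E := hpik ▸ hp.1
      have hik : i < k := by have := hlt _ hkE; simpa using this
      have hkj : k < j := by rw [← hpk]; exact hp.2.2
      have kmax : ∀ y, (i, y) ∈ E → y < j → y ≤ k := by
        intro y hy hyj
        exact K.le_max' y (Finset.mem_image.mpr ⟨(i, y), Finset.mem_filter.mpr ⟨hy, rfl, hyj⟩, rfl⟩)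
      -- decomposition: with or without (i,j)
      have hsub0 : ∀ q ∈ E.filter (fun p => i ≤ p.1 ∧ p.2 ≤ j), q = (i, j) ∨
          q ∈ (E.filter (fun p => i ≤ p.1 ∧ p.2 ≤ k)) ∨
          q ∈ (E.filter (fun p => k ≤ p.1 ∧ p.2 ≤ j)) := by
        intro q hq
        simp only [mem_filter] at *
        obtain ⟨hqE, hqi, hqj⟩ := hq
        have hqlt := hlt q hqE
        by_cases h2 : q.2 ≤ k
        · exact Or.inr (Or.inl ⟨hqE, hqi, h2⟩)
        by_cases h3 : k ≤ q.1
        · exact Or.inr (Or.inr ⟨hqE, h3, hqj⟩)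
        push_neg at h2 h3
        by_cases h4 : q.1 = i
        · by_cases h5 : q.2 = j
          · exact Or.inl (Prod.ext h4 h5)
          · exfalso
            have hqE' : (i, q.2) ∈ E := by
              have : (i, q.2) = q := Prod.ext h4.symm rfl
              rw [this]; exact hqE
            have := kmax q.2 hqE' (by omega)
            omega
        · exact absurd ⟨by omega, h3, h2⟩ (hnc (i, k) hkE q hqE)
      have hdisj : Disjoint (E.filter (fun p => i ≤ p.1 ∧ p.2 ≤ k))
          (E.filter (fun p => k ≤ p.1 ∧ p.2 ≤ j)) := by
        rw [Finset.disjoint_left]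
        intro q hq1 hq2
        simp only [mem_filter] at hq1 hq2
        have := hlt q hq1.1
        omega
      have hBk : cnt E i k ≤ 2 * (k - i) - 1 := hB (k - i) i k rfl hik
      have hBj : cnt E k j ≤ 2 * (j - k) - 1 := hB (j - k) k j rfl hkj
      -- if (i,j) ∉ E then bound drops
      have hijE : (i, j) ∈ E := by
        by_contra hijE
        have hsub : E.filter (fun p => i ≤ p.1 ∧ p.2 ≤ j) ⊆
            (E.filter (fun p => i ≤ p.1 ∧ p.2 ≤ k)) ∪ (E.filter (fun p => k ≤ p.1 ∧ p.2 ≤ j)) := by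
          intro q hq
          rcases hsub0 q hq with h | h | h
          · exfalso; apply hijE
            have := (Finset.mem_filter.mp hq).1
            rwa [h] at this
          · exact Finset.mem_union_left _ h
          · exact Finset.mem_union_right _ h
        have := Finset.card_le_card hsub
        rw [Finset.card_union_of_disjoint hdisj] at this
        unfold cnt at *
        omega
      refine ⟨hijE, fun _ => ⟨k, hik, hkj, hkE, ?_, ?_, ?_⟩⟩
      all_goals {
        -- need equalities first
        have hsub : E.filter (fun p => i ≤ p.1 ∧ p.2 ≤ j) ⊆
            insert (i, j) ((E.filter (fun p => i ≤ p.1 ∧ p.2 ≤ k)) ∪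
              (E.filter (fun p => k ≤ p.1 ∧ p.2 ≤ j))) := by
          intro q hq
          rcases hsub0 q hq with h | h | h
          · simp [h]
          · exact Finset.mem_insert_of_mem (Finset.mem_union_left _ h)
          · exact Finset.mem_insert_of_mem (Finset.mem_union_right _ h)
        have hc1 := Finset.card_le_card hsub
        have hc2 := Finset.card_insert_le (i, j) ((E.filter (fun p => i ≤ p.1 ∧ p.2 ≤ k)) ∪
              (E.filter (fun p => k ≤ p.1 ∧ p.2 ≤ j)))
        rw [Finset.card_union_of_disjoint hdisj] at hc2
        have heq1 : cnt E i k = 2 * (k - i) - 1 := by unfold cnt at *; omega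
        have heq2 : cnt E k j = 2 * (j - k) - 1 := by unfold cnt at *; omega
        first
        | exact heq1
        | exact heq2
        | exact ((IH (j - k) (by omega) k j rfl hkj heq2).1)
      }
    · -- K empty: contradiction with goodness
      exfalso
      rw [Finset.not_nonempty_iff_eq_empty] at hK
      have hsub : E.filter (fun p => i ≤ p.1 ∧ p.2 ≤ j) ⊆
          insert (i, j) (E.filter (fun p => i + 1 ≤ p.1 ∧ p.2 ≤ j)) := by
        intro q hq
        simp only [mem_filter, mem_insert] at *
        obtain ⟨hqE, hqi, hqj⟩ := hq
        by_cases h4 : q.1 = i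
        · by_cases h5 : q.2 = j
          · exact Or.inl (Prod.ext h4 h5)
          · exfalso
            have hqE' : (i, q.2) ∈ E := by
              have : (i, q.2) = q := Prod.ext h4.symm rfl
              rw [this]; exact hqE
            have : q.2 ∈ K := Finset.mem_image.mpr
              ⟨(i, q.2), Finset.mem_filter.mpr ⟨hqE', rfl, by
                have := hlt _ hqE'; simp at this ⊢; omega⟩, rfl⟩
            simp [hK] at this
        · exact Or.inr ⟨hqE, by omega, hqj⟩
      have hc1 := Finset.card_le_card hsub
      have hc2 := Finset.card_insert_le (i, j) (E.filter (fun p => i + 1 ≤ p.1 ∧ p.2 ≤ j))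
      have hIH1 : cnt E (i + 1) j ≤ 2 * (j - (i + 1)) - 1 :=
        hB (j - (i + 1)) _ _ rfl (by omega)
      unfold cnt at *
      omega

lemma propP (hlt : ∀ p ∈ E, p.1 < p.2)
    (hnc : ∀ p ∈ E, ∀ q ∈ E, ¬(p.1 < q.1 ∧ q.1 < p.2 ∧ p.2 < q.2))
    (hD : ∀ d i j, j - i = d → i < j → cnt E i j = 2 * (j - i) - 1 →
      (i, j) ∈ E ∧ (i + 1 < j → ∃ k, i < k ∧ k < j ∧ (i, k) ∈ E ∧ (k, j) ∈ E ∧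
        cnt E i k = 2 * (k - i) - 1 ∧ cnt E k j = 2 * (j - k) - 1)) :
    ∀ d i j, j - i = d → i < j → cnt E i j = 2 * (j - i) - 1 →
      ∀ x y, (x, y) ∈ E → i ≤ x → y ≤ j → cnt E x y = 2 * (y - x) - 1 := by
  intro d
  induction d using Nat.strong_induction_on with
  | _ d IH =>
  intro i j hd hij hgood x y hxy hix hyj
  have hxylt : x < y := by have := hlt _ hxy; simpa using this
  by_cases hxi : x = i ∧ y = j
  · rw [hxi.1, hxi.2]; exact hgood
  have h1 : i + 1 < j := by
    rcases Nat.lt_or_ge (i+1) j with h | h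
    · exact h
    · exfalso; apply hxi; omega
  obtain ⟨k, hik, hkj, hikE, hkjE, hg1, hg2⟩ := (hD d i j hd hij hgood).2 h1
  by_cases h2 : y ≤ k
  · exact IH (k - i) (by omega) i k rfl hik hg1 x y hxy hix h2
  by_cases h3 : k ≤ x
  · exact IH (j - k) (by omega) k j rfl hkj hg2 x y hxy h3 hyj
  push_neg at h2 h3
  exfalso
  by_cases h4 : x = i
  · have h5 : y < j := by
      rcases Nat.lt_or_ge y j with h | h
      · exact h
      · exfalso; exact hxi ⟨h4, by omega⟩
    exact hnc (x, y) hxy (k, j) hkjE ⟨by omega, by omega, by omega⟩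
  · exact hnc (i, k) hikE (x, y) hxy ⟨by omega, h3, h2⟩

lemma elemE (hlt : ∀ p ∈ E, p.1 < p.2)
    (hD : ∀ d i j, j - i = d → i < j → cnt E i j = 2 * (j - i) - 1 →
      (i, j) ∈ E ∧ (i + 1 < j → ∃ k, i < k ∧ k < j ∧ (i, k) ∈ E ∧ (k, j) ∈ E ∧
        cnt E i k = 2 * (k - i) - 1 ∧ cnt E k j = 2 * (j - k) - 1)) :
    ∀ d i j, j - i = d → i + 1 < j → cnt E i j = 2 * (j - i) - 1 →
      ∀ x, i ≤ x → x + 1 ≤ j → ∃ z, mem2 E x z ∧ mem2 E (x + 1) z := by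
  intro d
  induction d using Nat.strong_induction_on with
  | _ d IH =>
  intro i j hd hij hgood x hix hxj
  obtain ⟨hijE, hrest⟩ := hD d i j hd (by omega) hgood
  obtain ⟨k, hik, hkj, hikE, hkjE, hg1, hg2⟩ := hrest hij
  by_cases hx : x + 1 ≤ k
  · by_cases hk2 : i + 1 < k
    · exact IH (k - i) (by omega) i k rfl hk2 hg1 x hix hx
    · -- k = i + 1, x = i
      have hxi : x = i := by omega
      have hki : k = i + 1 := by omega
      refine ⟨j, Or.inl (by rw [hxi]; exact hijE), Or.inl ?_⟩
      rw [hxi, ← hki]; exact hkjE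
  · have hkx : k ≤ x := by omega
    by_cases hk2 : k + 1 < j
    · exact IH (j - k) (by omega) k j rfl hk2 hg2 x hkx hxj
    · -- j = k + 1, x = k
      have hxk : x = k := by omega
      have hjk : j = k + 1 := by omega
      refine ⟨i, Or.inr (by rw [hxk]; exact hikE), Or.inr ?_⟩
      rw [hxk, ← hjk]; exact hijE

lemma triE (hlt : ∀ p ∈ E, p.1 < p.2)
    (hnc : ∀ p ∈ E, ∀ q ∈ E, ¬(p.1 < q.1 ∧ q.1 < p.2 ∧ p.2 < q.2))
    {n : ℕ} (hn : 3 ≤ n) (hbound : ∀ p ∈ E, p.2 ≤ n - 1)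
    (hcard : E.card = 2 * n - 3) :
    ∀ p ∈ E, ∃ z, mem2 E p.1 z ∧ mem2 E p.2 z := by
  have hB := boundB hlt hnc
  have hD := splitD hlt hnc hB
  have hglobal : cnt E 0 (n - 1) = 2 * (n - 1 - 0) - 1 := by
    have : E.filter (fun p => 0 ≤ p.1 ∧ p.2 ≤ n - 1) = E := by
      apply Finset.filter_true_of_mem
      intro p hp
      exact ⟨Nat.zero_le _, hbound p hp⟩
    unfold cnt
    rw [this, hcard]
    omega
  intro p hp
  have hplt := hlt p hp
  have hpb := hbound p hp
  by_cases h1 : p.2 = p.1 + 1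
  · obtain ⟨z, hz1, hz2⟩ := elemE hlt hD (n - 1) 0 (n - 1) rfl (by omega) hglobal p.1
      (Nat.zero_le _) (by omega)
    exact ⟨z, hz1, h1 ▸ hz2⟩
  · have hgp : cnt E p.1 p.2 = 2 * (p.2 - p.1) - 1 :=
      propP hlt hnc hD (n - 1) 0 (n - 1) rfl (by omega) hglobal p.1 p.2
        (by rwa [Prod.mk.eta]) (Nat.zero_le _) hpb
    obtain ⟨k, hk1, hk2, hk3, hk4, -, -⟩ :=
      (hD (p.2 - p.1) p.1 p.2 rfl hplt hgp).2 (by omega)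
    exact ⟨k, Or.inl hk3, Or.inr hk4⟩

/-! ### master order lemma -/

lemma master (e : ℕ → ℕ → Prop)
    (hsym : ∀ x y, e x y → e y x)
    (hne : ∀ x y, e x y → x ≠ y)
    (hnc : ∀ i j k l, e i j → e k l → ¬(i < k ∧ k < j ∧ j < l))
    (a b c a' b' c' : ℕ)
    (hab : a < b) (hbc : b < c) (hab' : a' < b') (hbc' : b' < c')
    (eab : e a b) (ebc : e b c) (eac : e a c)
    (eab' : e a' b') (ebc' : e b' c') (eac' : e a' c')
    (HP : ∀ x y, (x = a ∨ x = b ∨ x = c) → (y = a' ∨ y = b' ∨ y = c') → ¬ e x y ∧ x ≠ y) :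
    b ≠ b' ∧ ¬ e b b' ∧ ∀ p, e b p → e b' p → False := by
  have cross : ∀ x y u v, e x y → e u v → x < u → u < y → y < v → False := by
    intro x y u v h1 h2 p1 p2 p3
    exact hnc x y u v h1 h2 ⟨p1, p2, p3⟩
  -- position case analysis
  have hcase : c' < b ∨ b < a' ∨ (a' < a ∧ c < c') := by
    rcases lt_trichotomy a' b with h1 | h1 | h1
    · rcases lt_trichotomy c' b with h2 | h2 | h2
      · exact Or.inl h2
      · exact absurd h2.symm (HP b c' (by tauto) (by tauto)).2
      · -- a' < b < c'
        right; right
        have ha'a : a' < a := by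
          rcases lt_trichotomy a' a with h3 | h3 | h3
          · exact h3
          · exact absurd h3.symm (HP a a' (by tauto) (by tauto)).2
          · exact (cross a b a' c' eab eac' h3 h1 h2).elim
        refine ⟨ha'a, ?_⟩
        rcases lt_trichotomy c' c with h3 | h3 | h3
        · exact (cross a' c' a c eac' eac ha'a (by omega) h3).elim
        · exact absurd h3.symm (HP c c' (by tauto) (by tauto)).2
        · exact h3
    · exact absurd h1.symm (HP b a' (by tauto) (by tauto)).2
    · exact Or.inr (Or.inl h1)
  have hbb' : b ≠ b' := (HP b b' (by tauto) (by tauto)).2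
  -- in case IIIc, locate b'
  have hIIIc : a' < a → c < c' → (b' < a ∨ c < b') := by
    intro h1 h2
    rcases lt_trichotomy b' a with h3 | h3 | h3
    · exact Or.inl h3
    · exact absurd h3.symm (HP a b' (by tauto) (by tauto)).2
    · rcases lt_trichotomy b' c with h4 | h4 | h4
      · exact (cross a' b' a c eab' eac h1 h3 h4).elim
      · exact absurd h4.symm (HP c b' (by tauto) (by tauto)).2
      · exact Or.inr h4
  have hnadj : ¬ e b b' := by
    intro h
    rcases hcase with h1 | h1 | ⟨h1, h2⟩
    · exact cross a' c' b' b eac' (hsym _ _ h) hab' hbc' h1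
    · exact cross b b' a' c' h eac' h1 hab' hbc'
    · rcases hIIIc h1 h2 with h3 | h3
      · exact cross b' b a c (hsym _ _ h) eac h3 (by omega) hbc
      · exact cross a c b b' eac h hab hbc h3
  refine ⟨hbb', hnadj, ?_⟩
  intro p ebp eb'p
  have hpb : p ≠ b := (hne b p ebp).symm
  have hpb' : p ≠ b' := (hne b' p eb'p).symm
  -- stage 1: a' ≤ p ≤ c'
  have hpa' : ¬ p < a' := fun h => cross p b' a' c' (hsym _ _ eb'p) eac' h (by omega) hbc'
  have hpc' : ¬ c' < p := fun h => cross a' c' b' p eac' eb'p hab' hbc' h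
  -- stage 2: p ≠ a', p ≠ c'
  have hpa'2 : p ≠ a' := fun h => (HP b a' (by tauto) (by tauto)).1 (h ▸ ebp)
  have hpc'2 : p ≠ c' := fun h => (HP b c' (by tauto) (by tauto)).1 (h ▸ ebp)
  have hp1 : a' < p := by omega
  have hp2 : p < c' := by omega
  -- stage 3
  rcases hcase with h1 | h1 | ⟨h1, h2⟩
  · exact cross a' c' p b eac' (hsym _ _ ebp) hp1 hp2 h1
  · exact cross b p a' c' ebp eac' h1 hp1 hp2
  · rcases lt_trichotomy p a with h3 | h3 | h3
    · exact cross p b a c (hsym _ _ ebp) eac h3 (by omega) hbc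
    · exact (HP a b' (by tauto) (by tauto)).1 (h3 ▸ (hsym _ _ eb'p))
    · rcases lt_trichotomy p c with h4 | h4 | h4
      · rcases hIIIc h1 h2 with h5 | h5
        · exact cross b' p a c eb'p eac h5 h3 h4
        · exact cross a c p b' eac (hsym _ _ eb'p) h3 h4 h5
      · exact (HP c b' (by tauto) (by tauto)).1 (h4 ▸ (hsym _ _ eb'p))
      · exact cross a c b p eac ebp hab hbc h4

/-! ### graph-level bridge -/

lemma ordered3 (I : Finset ℕ) (h : I.card = 3) :
    ∃ a b c : ℕ, a < b ∧ b < c ∧ I = {a, b, c} := by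
  obtain ⟨x, y, z, hxy, hxz, hyz, hI⟩ := Finset.card_eq_three.mp h
  subst hI
  rcases lt_trichotomy x y with h1 | h1 | h1
  · rcases lt_trichotomy y z with h2 | h2 | h2
    · exact ⟨x, y, z, h1, h2, rfl⟩
    · exact absurd h2 hyz
    · rcases lt_trichotomy x z with h3 | h3 | h3
      · exact ⟨x, z, y, h3, h2, by ext t; simp; tauto⟩
      · exact absurd h3 hxz
      · exact ⟨z, x, y, h3, h1, by ext t; simp; tauto⟩
  · exact absurd h1 hxy
  · rcases lt_trichotomy x z with h2 | h2 | h2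
    · exact ⟨y, x, z, h1, h2, by ext t; simp; tauto⟩
    · exact absurd h2 hxz
    · rcases lt_trichotomy y z with h3 | h3 | h3
      · exact ⟨y, z, x, h3, h2, by ext t; simp; tauto⟩
      · exact absurd h3 hyz
      · exact ⟨z, y, x, h3, h1, by ext t; simp; tauto⟩

variable {V : Type*} [Fintype V] [DecidableEq V]



/-- sorted index pairs of edges of `G` under the labeling `f` -/
def Eg {n : ℕ} (G : SimpleGraph V) [DecidableRel G.Adj] (f : Fin n ≃ V) : Finset (ℕ × ℕ) :=
  ((Finset.univ : Finset (Fin n × Fin n)).filter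
    (fun p => p.1 < p.2 ∧ G.Adj (f p.1) (f p.2))).image (fun p => (p.1.1, p.2.1))

lemma mem_Eg_iff {n : ℕ} {G : SimpleGraph V} [DecidableRel G.Adj] {f : Fin n ≃ V} {x y : ℕ} :
    (x, y) ∈ Eg G f ↔ ∃ (hx : x < n) (hy : y < n), x < y ∧ G.Adj (f ⟨x, hx⟩) (f ⟨y, hy⟩) := by
  constructor
  · intro h
    obtain ⟨p, hp, heq⟩ := Finset.mem_image.mp h
    simp only [Finset.mem_filter, Finset.mem_univ, true_and] at hp
    obtain ⟨h1, h2⟩ := Prod.mk.injEq .. ▸ heq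
    subst h1; subst h2
    exact ⟨p.1.isLt, p.2.isLt, hp.1, by simpa [Fin.eta] using hp.2⟩
  · rintro ⟨hx, hy, hxy, hadj⟩
    exact Finset.mem_image.mpr ⟨(⟨x, hx⟩, ⟨y, hy⟩),
      Finset.mem_filter.mpr ⟨Finset.mem_univ _, hxy, hadj⟩, rfl⟩

lemma Eg_lt {n : ℕ} {G : SimpleGraph V} [DecidableRel G.Adj] {f : Fin n ≃ V} :
    ∀ p ∈ Eg G f, p.1 < p.2 := by
  rintro ⟨x, y⟩ hp
  obtain ⟨_, _, h, _⟩ := mem_Eg_iff.mp hp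
  exact h

lemma Eg_bound {n : ℕ} {G : SimpleGraph V} [DecidableRel G.Adj] {f : Fin n ≃ V} :
    ∀ p ∈ Eg G f, p.2 ≤ n - 1 := by
  rintro ⟨x, y⟩ hp
  obtain ⟨_, hy, _, _⟩ := mem_Eg_iff.mp hp
  omega

lemma Eg_nc {n : ℕ} {G : SimpleGraph V} [DecidableRel G.Adj] {f : Fin n ≃ V}
    (hnc : ∀ i j k l : Fin n, G.Adj (f i) (f j) → G.Adj (f k) (f l) →
      ¬ (i < k ∧ k < j ∧ j < l)) :
    ∀ p ∈ Eg G f, ∀ q ∈ Eg G f, ¬(p.1 < q.1 ∧ q.1 < p.2 ∧ p.2 < q.2) := by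
  rintro ⟨x, y⟩ hp ⟨u, v⟩ hq ⟨c1, c2, c3⟩
  obtain ⟨hx, hy, hxy, hadj1⟩ := mem_Eg_iff.mp hp
  obtain ⟨hu, hv, huv, hadj2⟩ := mem_Eg_iff.mp hq
  exact hnc ⟨x, hx⟩ ⟨y, hy⟩ ⟨u, hu⟩ ⟨v, hv⟩ hadj1 hadj2 ⟨c1, c2, c3⟩

lemma Eg_card {n : ℕ} {G : SimpleGraph V} [DecidableRel G.Adj] (f : Fin n ≃ V) :
    (Eg G f).card = G.edgeSet.ncard := by
  have h1 : (Eg G f).card = ((Finset.univ : Finset (Fin n × Fin n)).filter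
      (fun p => p.1 < p.2 ∧ G.Adj (f p.1) (f p.2))).card := by
    apply Finset.card_image_of_injective
    intro p q hpq
    obtain ⟨h1, h2⟩ := Prod.mk.injEq .. ▸ hpq
    exact Prod.ext (Fin.val_injective h1) (Fin.val_injective h2)
  rw [h1, Set.ncard_eq_toFinset_card']
  apply Finset.card_bij (fun p _ => s(f p.1, f p.2))
  · rintro ⟨x, y⟩ hp
    simp only [Finset.mem_filter, Finset.mem_univ, true_and] at hp
    simp only [Set.mem_toFinset, mem_edgeSet]
    exact hp.2
  · rintro ⟨x, y⟩ hp ⟨u, v⟩ hq heq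
    simp only [Finset.mem_filter, Finset.mem_univ, true_and] at hp hq
    rw [Sym2.eq_iff] at heq
    rcases heq with ⟨h1, h2⟩ | ⟨h1, h2⟩
    · exact Prod.ext (f.injective h1) (f.injective h2)
    · exfalso
      have hxv : x = v := f.injective h1
      have hyu : y = u := f.injective h2
      subst hxv; subst hyu
      exact absurd hq.1 (by simp; exact le_of_lt hp.1)
  · intro e he
    simp only [Set.mem_toFinset] at he
    induction e with
    | _ u v =>
      have hadj : G.Adj u v := he
      have hne : f.symm u ≠ f.symm v := fun h => hadj.ne (by
        have := congrArg f h; simpa using this)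
      rcases lt_or_gt_of_ne hne with h | h
      · refine ⟨(f.symm u, f.symm v), ?_, by simp⟩
        simp only [Finset.mem_filter, Finset.mem_univ, true_and]
        exact ⟨h, by simpa using hadj⟩
      · refine ⟨(f.symm v, f.symm u), ?_, ?_⟩
        · simp only [Finset.mem_filter, Finset.mem_univ, true_and]
          exact ⟨h, by simpa using hadj.symm⟩
        · simp [Sym2.eq_swap]

lemma adj_of_mem2 {n : ℕ} {G : SimpleGraph V} [DecidableRel G.Adj] {f : Fin n ≃ V} {x z : ℕ}
    (h : mem2 (Eg G f) x z) :
    ∃ (hx : x < n) (hz : z < n), G.Adj (f ⟨x, hx⟩) (f ⟨z, hz⟩) := by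
  rcases h with h | h
  · obtain ⟨hx, hz, _, hadj⟩ := mem_Eg_iff.mp h
    exact ⟨hx, hz, hadj⟩
  · obtain ⟨hz, hx, _, hadj⟩ := mem_Eg_iff.mp h
    exact ⟨hx, hz, hadj.symm⟩


end MopAux

theorem mop_cliqueGraph_packing {V : Type*} [Fintype V] [DecidableEq V]
    (G : SimpleGraph V) (hmop : IsMaximalOuterplanar G) (hn : 3 ≤ Fintype.card V) :
    (∀ Z : Finset {t : Finset V // G.IsNClique 3 t}, IsPackingSet (cliqueGraph G) Z →
        ∃ Y : Finset V, IsPackingSet G Y ∧ Y.card = Z.card) ∧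
      packNum (cliqueGraph G) ≤ packNum G := by
  classical
  open MopAux in
  obtain ⟨f, -, hncr, hcount⟩ := hmop
  letI : DecidableRel G.Adj := Classical.decRel _
  have part1 : ∀ Z : Finset {t : Finset V // G.IsNClique 3 t},
      IsPackingSet (cliqueGraph G) Z →
      ∃ Y : Finset V, IsPackingSet G Y ∧ Y.card = Z.card := by
    intro Z hZ
    have hlt := MopAux.Eg_lt (G := G) (f := f)
    have hbd := MopAux.Eg_bound (G := G) (f := f)
    have hncE := MopAux.Eg_nc (G := G) (f := f) hncr
    have hcardE : (MopAux.Eg G f).card = 2 * Fintype.card V - 3 := by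
      rw [MopAux.Eg_card]; exact hcount
    have htriE := MopAux.triE hlt hncE hn hbd hcardE
    -- every edge of G lies in a triangle
    have triV : ∀ u v : V, G.Adj u v → ∃ w, G.Adj u w ∧ G.Adj v w := by
      intro u v hadj
      have hne' : f.symm u ≠ f.symm v := fun h => hadj.ne (by
        have := congrArg f h; simpa using this)
      rcases lt_or_gt_of_ne hne' with hlt' | hlt'
      · have hp : (((f.symm u : Fin _) : ℕ), ((f.symm v : Fin _) : ℕ)) ∈ MopAux.Eg G f :=
          MopAux.mem_Eg_iff.mpr ⟨(f.symm u).isLt, (f.symm v).isLt, hlt', by simpa using hadj⟩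
        obtain ⟨zz, hz1, hz2⟩ := htriE _ hp
        obtain ⟨hx1, hz1', ha1⟩ := MopAux.adj_of_mem2 hz1
        obtain ⟨hx2, hz2', ha2⟩ := MopAux.adj_of_mem2 hz2
        exact ⟨f ⟨zz, hz1'⟩, by simpa using ha1, by simpa using ha2⟩
      · have hp : (((f.symm v : Fin _) : ℕ), ((f.symm u : Fin _) : ℕ)) ∈ MopAux.Eg G f :=
          MopAux.mem_Eg_iff.mpr ⟨(f.symm v).isLt, (f.symm u).isLt, hlt', by simpa using hadj.symm⟩
        obtain ⟨zz, hz1, hz2⟩ := htriE _ hp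
        obtain ⟨hx1, hz1', ha1⟩ := MopAux.adj_of_mem2 hz1
        obtain ⟨hx2, hz2', ha2⟩ := MopAux.adj_of_mem2 hz2
        exact ⟨f ⟨zz, hz1'⟩, by simpa using ha2, by simpa using ha1⟩
    -- the symmetric edge relation on indices
    set e : ℕ → ℕ → Prop := fun x y => MopAux.mem2 (MopAux.Eg G f) x y with he_def
    have he_sym : ∀ x y, e x y → e y x := fun x y h => Or.symm h
    have he_ne : ∀ x y, e x y → x ≠ y := by
      intro x y h
      rcases h with h | h
      · exact (hlt _ h).ne
      · exact (hlt _ h).ne'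
    have he_nc : ∀ i j k l, e i j → e k l → ¬(i < k ∧ k < j ∧ j < l) := by
      rintro i j k l h1 h2 ⟨c1, c2, c3⟩
      have hij : i < j := c1.trans c2
      have hkl : k < l := c2.trans c3
      have h1' : (i, j) ∈ MopAux.Eg G f := by
        rcases h1 with h | h
        · exact h
        · exact absurd (hlt _ h) (by omega)
      have h2' : (k, l) ∈ MopAux.Eg G f := by
        rcases h2 with h | h
        · exact h
        · exact absurd (hlt _ h) (by omega)
      exact hncE _ h1' _ h2' ⟨c1, c2, c3⟩
    -- index triples of the triangles
    have htriple : ∀ s : {t : Finset V // G.IsNClique 3 t}, ∃ a b c : ℕ, a < b ∧ b < c ∧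
        s.1.image (fun v => ((f.symm v : Fin (Fintype.card V)) : ℕ)) = {a, b, c} := by
      intro s
      apply MopAux.ordered3
      rw [Finset.card_image_of_injective _
        (fun u v huv => f.symm.injective (Fin.val_injective huv))]
      exact s.2.card_eq
    choose fA fB fC hAB hBC hIdx using htriple
    -- edges inside each triangle
    have hedge : ∀ (s : {t : Finset V // G.IsNClique 3 t}) (x y : ℕ),
        x ∈ s.1.image (fun v => ((f.symm v : Fin (Fintype.card V)) : ℕ)) →
        y ∈ s.1.image (fun v => ((f.symm v : Fin (Fintype.card V)) : ℕ)) →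
        x < y → (x, y) ∈ MopAux.Eg G f := by
      intro s x y hx hy hxy
      obtain ⟨u, hu, hux⟩ := Finset.mem_image.mp hx
      obtain ⟨v, hv, hvy⟩ := Finset.mem_image.mp hy
      subst hux; subst hvy
      have huv : u ≠ v := fun h => hxy.ne (by rw [h])
      have hadj : G.Adj u v := s.2.isClique (Finset.mem_coe.mpr hu) (Finset.mem_coe.mpr hv) huv
      exact MopAux.mem_Eg_iff.mpr ⟨(f.symm u).isLt, (f.symm v).isLt, hxy, by simpa using hadj⟩
    -- no triangle meets two distinct packing triangles
    have hnotri : ∀ s ∈ Z, ∀ t ∈ Z, s ≠ t → ∀ (r : Finset V) (hr : G.IsNClique 3 r),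
        (r ∩ s.1).Nonempty → (r ∩ t.1).Nonempty → False := by
      intro s hs t ht hst r hr h1 h2
      have hd := hZ s hs t ht hst
      have m1 : (⟨r, hr⟩ : {t : Finset V // G.IsNClique 3 t}) ∈
          insert s ((cliqueGraph G).neighborSet s) := by
        by_cases h : (⟨r, hr⟩ : {t : Finset V // G.IsNClique 3 t}) = s
        · exact Set.mem_insert_iff.mpr (Or.inl h)
        · refine Set.mem_insert_iff.mpr (Or.inr ?_)
          show (cliqueGraph G).Adj s ⟨r, hr⟩
          exact (SimpleGraph.fromRel_adj _ _ _).mpr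
            ⟨fun hh => h hh.symm, Or.inr (by simpa [Finset.inter_comm] using h1)⟩
      have m2 : (⟨r, hr⟩ : {t : Finset V // G.IsNClique 3 t}) ∈
          insert t ((cliqueGraph G).neighborSet t) := by
        by_cases h : (⟨r, hr⟩ : {t : Finset V // G.IsNClique 3 t}) = t
        · exact Set.mem_insert_iff.mpr (Or.inl h)
        · refine Set.mem_insert_iff.mpr (Or.inr ?_)
          show (cliqueGraph G).Adj t ⟨r, hr⟩
          exact (SimpleGraph.fromRel_adj _ _ _).mpr
            ⟨fun hh => h hh.symm, Or.inr (by simpa [Finset.inter_comm] using h2)⟩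
      exact Set.disjoint_left.mp hd m1 m2
    -- no edges between distinct packing triangles
    have key : ∀ s ∈ Z, ∀ t ∈ Z, s ≠ t → ∀ x y,
        x ∈ s.1.image (fun v => ((f.symm v : Fin (Fintype.card V)) : ℕ)) →
        y ∈ t.1.image (fun v => ((f.symm v : Fin (Fintype.card V)) : ℕ)) →
        ¬ e x y ∧ x ≠ y := by
      intro s hs t ht hst x y hx hy
      obtain ⟨u, hu, hux⟩ := Finset.mem_image.mp hx
      obtain ⟨v, hv, hvy⟩ := Finset.mem_image.mp hy
      constructor
      · intro hexy
        obtain ⟨hx', hy', hadj⟩ := MopAux.adj_of_mem2 hexy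
        have hfu : f ⟨x, hx'⟩ = u := by
          have h1 : (⟨x, hx'⟩ : Fin _) = f.symm u := Fin.val_injective (by simp [hux])
          rw [h1, Equiv.apply_symm_apply]
        have hfv : f ⟨y, hy'⟩ = v := by
          have h1 : (⟨y, hy'⟩ : Fin _) = f.symm v := Fin.val_injective (by simp [hvy])
          rw [h1, Equiv.apply_symm_apply]
        obtain ⟨w, hw1, hw2⟩ := triV _ _ hadj
        have hclique : G.IsNClique 3 {f ⟨x, hx'⟩, f ⟨y, hy'⟩, w} :=
          SimpleGraph.is3Clique_iff.mpr ⟨_, _, _, hadj, hw1, hw2, rfl⟩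
        refine hnotri s hs t ht hst _ hclique ⟨f ⟨x, hx'⟩, Finset.mem_inter.mpr ⟨by simp, ?_⟩⟩
          ⟨f ⟨y, hy'⟩, Finset.mem_inter.mpr ⟨by simp, ?_⟩⟩
        · rw [hfu]; exact hu
        · rw [hfv]; exact hv
      · intro hxy
        subst hxy
        have huv : u = v := f.symm.injective (Fin.val_injective (by rw [hux, hvy]))
        refine hnotri s hs t ht hst s.1 s.2 ⟨u, Finset.mem_inter.mpr ⟨hu, hu⟩⟩
          ⟨u, Finset.mem_inter.mpr ⟨hu, ?_⟩⟩
        rw [huv]; exact hv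
    -- apply the master lemma pairwise
    have pairing : ∀ s ∈ Z, ∀ t ∈ Z, s ≠ t →
        (fB s ≠ fB t ∧ ¬ e (fB s) (fB t) ∧ ∀ p, e (fB s) p → e (fB t) p → False) := by
      intro s hs t ht hst
      have hAm : ∀ s', fA s' ∈ s'.1.image (fun v => ((f.symm v : Fin (Fintype.card V)) : ℕ)) :=
        fun s' => by rw [hIdx s']; simp
      have hBm : ∀ s', fB s' ∈ s'.1.image (fun v => ((f.symm v : Fin (Fintype.card V)) : ℕ)) :=
        fun s' => by rw [hIdx s']; simp
      have hCm : ∀ s', fC s' ∈ s'.1.image (fun v => ((f.symm v : Fin (Fintype.card V)) : ℕ)) :=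
        fun s' => by rw [hIdx s']; simp
      refine MopAux.master e he_sym he_ne he_nc (fA s) (fB s) (fC s) (fA t) (fB t) (fC t)
        (hAB s) (hBC s) (hAB t) (hBC t)
        (Or.inl (hedge s _ _ (hAm s) (hBm s) (hAB s)))
        (Or.inl (hedge s _ _ (hBm s) (hCm s) (hBC s)))
        (Or.inl (hedge s _ _ (hAm s) (hCm s) ((hAB s).trans (hBC s))))
        (Or.inl (hedge t _ _ (hAm t) (hBm t) (hAB t)))
        (Or.inl (hedge t _ _ (hBm t) (hCm t) (hBC t)))
        (Or.inl (hedge t _ _ (hAm t) (hCm t) ((hAB t).trans (hBC t)))) ?_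
      intro x y hx hy
      apply key s hs t ht hst
      · rcases hx with h | h | h <;> (rw [hIdx s]; simp [h])
      · rcases hy with h | h | h <;> (rw [hIdx t]; simp [h])
    -- the selection: the middle vertex of each triangle
    have hBv : ∀ s : {t : Finset V // G.IsNClique 3 t},
        ∃ v, v ∈ s.1 ∧ ((f.symm v : Fin (Fintype.card V)) : ℕ) = fB s := by
      intro s
      have : fB s ∈ s.1.image (fun v => ((f.symm v : Fin (Fintype.card V)) : ℕ)) := by
        rw [hIdx s]; simp
      simpa [Finset.mem_image] using this
    choose sel hselmem hselidx using hBv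
    have toE2 : ∀ (s : {t : Finset V // G.IsNClique 3 t}) (z : V),
        G.Adj (sel s) z → e (fB s) ((f.symm z : Fin (Fintype.card V)) : ℕ) := by
      intro s z hadj
      have hb : fB s < Fintype.card V := by rw [← hselidx s]; exact (f.symm (sel s)).isLt
      have hz : ((f.symm z : Fin (Fintype.card V)) : ℕ) < Fintype.card V := (f.symm z).isLt
      have hfb : f ⟨fB s, hb⟩ = sel s := by
        have h1 : (⟨fB s, hb⟩ : Fin _) = f.symm (sel s) :=
          Fin.val_injective (by simp [hselidx s])
        rw [h1, Equiv.apply_symm_apply]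
      have hadj' : G.Adj (f ⟨fB s, hb⟩) (f ⟨((f.symm z : Fin (Fintype.card V)) : ℕ), hz⟩) := by
        rw [hfb]; simpa using hadj
      rcases lt_trichotomy (fB s) (((f.symm z : Fin (Fintype.card V)) : ℕ)) with h | h | h
      · exact Or.inl (MopAux.mem_Eg_iff.mpr ⟨hb, hz, h, hadj'⟩)
      · exact absurd (congrArg f (Fin.val_injective h :
          (⟨fB s, hb⟩ : Fin _) = ⟨((f.symm z : Fin (Fintype.card V)) : ℕ), hz⟩)) hadj'.ne
      · exact Or.inr (MopAux.mem_Eg_iff.mpr ⟨hz, hb, h, hadj'.symm⟩)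
    refine ⟨Z.image sel, ?_, ?_⟩
    · intro u hu v hv huv
      obtain ⟨s, hs, rfl⟩ := Finset.mem_image.mp hu
      obtain ⟨t, ht, rfl⟩ := Finset.mem_image.mp hv
      have hst : s ≠ t := fun h => huv (by rw [h])
      obtain ⟨hBne, hBnadj, hBcomm⟩ := pairing s hs t ht hst
      rw [Set.disjoint_left]
      rintro z hz1 hz2
      simp only [Set.mem_insert_iff, SimpleGraph.mem_neighborSet] at hz1 hz2
      rcases hz1 with rfl | hz1
      · rcases hz2 with h | hz2
        · exact huv h
        · have hh := toE2 t _ hz2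
          rw [hselidx s] at hh
          exact hBnadj (he_sym _ _ hh)
      · rcases hz2 with rfl | hz2
        · have hh := toE2 s _ hz1
          rw [hselidx t] at hh
          exact hBnadj hh
        · exact hBcomm _ (toE2 s z hz1) (toE2 t z hz2)
    · apply Finset.card_image_of_injOn
      intro s hs t ht hsel
      by_contra hst
      exact (pairing s hs t ht hst).1 (by rw [← hselidx s, ← hselidx t, hsel])
  refine ⟨part1, ?_⟩
  apply csSup_le_csSup
  · exact ⟨Fintype.card V, by rintro m ⟨Y, -, rfl⟩; exact Finset.card_le_univ Y⟩
  · exact ⟨0, ∅, fun u hu => absurd hu (Finset.notMem_empty u), Finset.card_empty⟩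
  · rintro m ⟨Z, hZ, rfl⟩
    obtain ⟨Y, h1, h2⟩ := part1 Z hZ
    exact ⟨Y, h1, h2⟩
end

section
/- Every maximal outerplanar graph G admits a proper 4-coloring of its vertices such that every 4-cycle of G receives all four colors. -/
open SimpleGraph Finset

set_option maxHeartbeats 1000000

namespace MopAux

/-- Edges of `F` with both endpoints in `[a,b]`. -/
def W (F : Finset (ℕ × ℕ)) (a b : ℕ) : Finset (ℕ × ℕ) :=
  F.filter fun p => a ≤ p.1 ∧ p.2 ≤ b

/-- Symmetrized membership. -/
def sF (F : Finset (ℕ × ℕ)) (x y : ℕ) : Prop := (x, y) ∈ F ∨ (y, x) ∈ F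

structure Setting (n : ℕ) (F : Finset (ℕ × ℕ)) : Prop where
  hn : 2 ≤ n
  mem_bound : ∀ {i j : ℕ}, (i, j) ∈ F → i < j ∧ j < n
  ham : ∀ i : ℕ, i + 1 < n → (i, i + 1) ∈ F
  noncross : ∀ {i j k l : ℕ}, (i, j) ∈ F → (k, l) ∈ F → ¬(i < k ∧ k < j ∧ j < l)

variable {n : ℕ} {F : Finset (ℕ × ℕ)}

lemma mem_W {a b i j : ℕ} : (i, j) ∈ W F a b ↔ (i, j) ∈ F ∧ a ≤ i ∧ j ≤ b := by
  simp [W, Finset.mem_filter, and_assoc]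

lemma sF_comm {x y : ℕ} (h : sF F x y) : sF F y x := h.symm

lemma sF_ne (S : Setting n F) {x y : ℕ} (h : sF F x y) : x ≠ y := by
  rcases h with h | h <;> have := S.mem_bound h <;> omega

lemma sF_mem_of_lt (S : Setting n F) {x y : ℕ} (h : sF F x y) (hlt : x < y) : (x, y) ∈ F := by
  rcases h with h | h
  · exact h
  · exact absurd (S.mem_bound h).1 (by omega)

lemma split_sub (S : Setting n F) {a t b : ℕ} (hat : (a, t) ∈ F)
    (hmax : ∀ s, t < s → s < b → (a, s) ∉ F) {i j : ℕ} (hij : (i, j) ∈ W F a b) :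
    (i = a ∧ j = b) ∨ (a ≤ i ∧ j ≤ t) ∨ (t ≤ i ∧ j ≤ b) := by
  rw [mem_W] at hij
  obtain ⟨hFm, hai, hjb⟩ := hij
  have hb := S.mem_bound hFm
  rcases eq_or_lt_of_le hai with he | hlt
  · subst he
    by_cases hjt : j ≤ t
    · exact Or.inr (Or.inl ⟨le_rfl, hjt⟩)
    · push_neg at hjt
      by_cases hjb' : j = b
      · exact Or.inl ⟨rfl, hjb'⟩
      · exact absurd hFm (hmax j hjt (by omega))
  · by_cases hti : t ≤ i
    · exact Or.inr (Or.inr ⟨hti, hjb⟩)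
    · push_neg at hti
      by_cases hjt : j ≤ t
      · exact Or.inr (Or.inl ⟨le_of_lt hlt, hjt⟩)
      · exact absurd ⟨hlt, hti, by omega⟩ (S.noncross hat hFm)

lemma W_empty (S : Setting n F) {a b : ℕ} (h : b ≤ a) : W F a b = ∅ := by
  ext p
  simp only [Finset.notMem_empty, iff_false]
  intro hp
  obtain ⟨i, j⟩ := p
  rw [mem_W] at hp
  rcases hp with ⟨hm, hai, hjb⟩
  have := (S.mem_bound hm).1
  omega

lemma W_mono_left {a t b : ℕ} (h : t ≤ b) : W F a t ⊆ W F a b := by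
  intro p hp
  obtain ⟨i, j⟩ := p
  rw [mem_W] at hp ⊢
  exact ⟨hp.1, hp.2.1, le_trans hp.2.2 h⟩

lemma W_mono_right {a t b : ℕ} (h : a ≤ t) : W F t b ⊆ W F a b := by
  intro p hp
  obtain ⟨i, j⟩ := p
  rw [mem_W] at hp ⊢
  exact ⟨hp.1, le_trans h hp.2.1, hp.2.2⟩

lemma W_card_le (S : Setting n F) :
    ∀ d a b : ℕ, b - a ≤ d → b ≤ n - 1 → (W F a b).card ≤ 2 * (b - a) - 1 := by
  intro d
  induction d with
  | zero =>
    intro a b hd _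
    rw [W_empty S (by omega)]
    simp
  | succ d ih =>
    intro a b hd hbn
    by_cases hba : b ≤ a
    · rw [W_empty S hba]; simp
    push_neg at hba
    by_cases hb1 : b = a + 1
    · subst hb1
      have hsub : W F a (a + 1) ⊆ {(a, a + 1)} := by
        intro p hp
        obtain ⟨i, j⟩ := p
        rw [mem_W] at hp
        have := (S.mem_bound hp.1).1
        have hia : i = a := by omega
        have hja : j = a + 1 := by omega
        simp [hia, hja]
      calc (W F a (a+1)).card ≤ ({(a, a+1)} : Finset (ℕ × ℕ)).card := Finset.card_le_card hsub
        _ = 1 := Finset.card_singleton _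
        _ ≤ 2 * (a + 1 - a) - 1 := by omega
    · -- b ≥ a + 2
      have hb2 : a + 2 ≤ b := by omega
      by_cases habF : (a, b) ∈ F
      · -- use t2 = max over [a+1, b-1]
        have hne : a + 1 ∈ (Finset.Ico (a+1) b).filter fun s => (a, s) ∈ F := by
          rw [Finset.mem_filter, Finset.mem_Ico]
          exact ⟨⟨le_rfl, by omega⟩, S.ham a (by omega)⟩
        set M := (Finset.Ico (a+1) b).filter (fun s => (a, s) ∈ F) with hM
        have hMne : M.Nonempty := ⟨a + 1, hne⟩
        set t := M.max' hMne with ht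
        have htM : t ∈ M := M.max'_mem hMne
        rw [hM, Finset.mem_filter, Finset.mem_Ico] at htM
        obtain ⟨⟨hta, htb⟩, hatF⟩ := htM
        have hmax : ∀ s, t < s → s < b → (a, s) ∉ F := by
          intro s hts hsb hsF
          have : s ≤ t := M.le_max' s (by rw [hM, Finset.mem_filter, Finset.mem_Ico]; exact ⟨⟨by omega, hsb⟩, hsF⟩)
          omega
        have hsub : W F a b ⊆ insert (a, b) (W F a t ∪ W F t b) := by
          intro p hp
          obtain ⟨i, j⟩ := p
          rcases split_sub S hatF hmax hp with ⟨h1, h2⟩ | ⟨h1, h2⟩ | ⟨h1, h2⟩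
          · subst h1; subst h2; exact Finset.mem_insert_self _ _
          · refine Finset.mem_insert_of_mem (Finset.mem_union_left _ ?_)
            rw [mem_W]; exact ⟨(mem_W.mp hp).1, h1, h2⟩
          · refine Finset.mem_insert_of_mem (Finset.mem_union_right _ ?_)
            rw [mem_W]; exact ⟨(mem_W.mp hp).1, h1, h2⟩
        have hL := ih a t (by omega) (by omega)
        have hR := ih t b (by omega) hbn
        calc (W F a b).card ≤ (insert (a, b) (W F a t ∪ W F t b)).card := Finset.card_le_card hsub
          _ ≤ (W F a t ∪ W F t b).card + 1 := Finset.card_insert_le _ _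
          _ ≤ ((W F a t).card + (W F t b).card) + 1 := by
              exact Nat.add_le_add_right (Finset.card_union_le _ _) 1
          _ ≤ 2 * (b - a) - 1 := by omega
      · -- (a,b) ∉ F : t = max over [a+1, b]
        have hne : a + 1 ∈ (Finset.Ico (a+1) (b+1)).filter fun s => (a, s) ∈ F := by
          rw [Finset.mem_filter, Finset.mem_Ico]
          exact ⟨⟨le_rfl, by omega⟩, S.ham a (by omega)⟩
        set M := (Finset.Ico (a+1) (b+1)).filter (fun s => (a, s) ∈ F) with hM
        have hMne : M.Nonempty := ⟨a + 1, hne⟩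
        set t := M.max' hMne with ht
        have htM : t ∈ M := M.max'_mem hMne
        rw [hM, Finset.mem_filter, Finset.mem_Ico] at htM
        obtain ⟨⟨hta, htb'⟩, hatF⟩ := htM
        have htb : t < b := by
          rcases eq_or_lt_of_le (by omega : t ≤ b) with h | h
          · exact absurd (h ▸ hatF) habF
          · exact h
        have hmax : ∀ s, t < s → s < b → (a, s) ∉ F := by
          intro s hts hsb hsF
          have : s ≤ t := M.le_max' s (by rw [hM, Finset.mem_filter, Finset.mem_Ico]; exact ⟨⟨by omega, by omega⟩, hsF⟩)
          omega
        have hsub : W F a b ⊆ W F a t ∪ W F t b := by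
          intro p hp
          obtain ⟨i, j⟩ := p
          rcases split_sub S hatF hmax hp with ⟨h1, h2⟩ | ⟨h1, h2⟩ | ⟨h1, h2⟩
          · exact absurd ((h1 ▸ h2 ▸ mem_W.mp hp).1) habF
          · refine Finset.mem_union_left _ ?_
            rw [mem_W]; exact ⟨(mem_W.mp hp).1, h1, h2⟩
          · refine Finset.mem_union_right _ ?_
            rw [mem_W]; exact ⟨(mem_W.mp hp).1, h1, h2⟩
        have hL := ih a t (by omega) (by omega)
        have hR := ih t b (by omega) hbn
        calc (W F a b).card ≤ (W F a t ∪ W F t b).card := Finset.card_le_card hsub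
          _ ≤ (W F a t).card + (W F t b).card := Finset.card_union_le _ _
          _ ≤ 2 * (b - a) - 1 := by omega

lemma full_mem (S : Setting n F) {a b : ℕ} (hab : a < b) (hbn : b ≤ n - 1)
    (hfull : (W F a b).card = 2 * (b - a) - 1) : (a, b) ∈ F := by
  by_contra habF
  by_cases hb1 : b = a + 1
  · exact habF (hb1 ▸ S.ham a (by omega))
  · have hb2 : a + 2 ≤ b := by omega
    have hne : a + 1 ∈ (Finset.Ico (a+1) (b+1)).filter fun s => (a, s) ∈ F := by
      rw [Finset.mem_filter, Finset.mem_Ico]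
      exact ⟨⟨le_rfl, by omega⟩, S.ham a (by omega)⟩
    set M := (Finset.Ico (a+1) (b+1)).filter (fun s => (a, s) ∈ F) with hM
    have hMne : M.Nonempty := ⟨a + 1, hne⟩
    set t := M.max' hMne with ht
    have htM : t ∈ M := M.max'_mem hMne
    rw [hM, Finset.mem_filter, Finset.mem_Ico] at htM
    obtain ⟨⟨hta, htb'⟩, hatF⟩ := htM
    have htb : t < b := by
      rcases eq_or_lt_of_le (by omega : t ≤ b) with h | h
      · exact absurd (h ▸ hatF) habF
      · exact h
    have hmax : ∀ s, t < s → s < b → (a, s) ∉ F := by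
      intro s hts hsb hsF
      have : s ≤ t := M.le_max' s (by rw [hM, Finset.mem_filter, Finset.mem_Ico]; exact ⟨⟨by omega, by omega⟩, hsF⟩)
      omega
    have hsub : W F a b ⊆ W F a t ∪ W F t b := by
      intro p hp
      obtain ⟨i, j⟩ := p
      rcases split_sub S hatF hmax hp with ⟨h1, h2⟩ | ⟨h1, h2⟩ | ⟨h1, h2⟩
      · exact absurd ((h1 ▸ h2 ▸ mem_W.mp hp).1) habF
      · exact Finset.mem_union_left _ (by rw [mem_W]; exact ⟨(mem_W.mp hp).1, h1, h2⟩)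
      · exact Finset.mem_union_right _ (by rw [mem_W]; exact ⟨(mem_W.mp hp).1, h1, h2⟩)
    have hL := W_card_le S (t - a) a t le_rfl (by omega)
    have hR := W_card_le S (b - t) t b le_rfl hbn
    have hcard : (W F a b).card ≤ (W F a t).card + (W F t b).card :=
      le_trans (Finset.card_le_card hsub) (Finset.card_union_le _ _)
    omega

lemma full_split (S : Setting n F) {a b : ℕ} (hab : a + 2 ≤ b) (hbn : b ≤ n - 1)
    (hfull : (W F a b).card = 2 * (b - a) - 1) :
    ∃ t : ℕ, a < t ∧ t < b ∧ (a, t) ∈ F ∧ (t, b) ∈ F ∧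
      (W F a t).card = 2 * (t - a) - 1 ∧ (W F t b).card = 2 * (b - t) - 1 ∧
      ∀ i j : ℕ, (i, j) ∈ W F a b → ¬(i = a ∧ j = b) → j ≤ t ∨ t ≤ i := by
  have habF : (a, b) ∈ F := full_mem S (by omega) hbn hfull
  have hne : a + 1 ∈ (Finset.Ico (a+1) b).filter fun s => (a, s) ∈ F := by
    rw [Finset.mem_filter, Finset.mem_Ico]
    exact ⟨⟨le_rfl, by omega⟩, S.ham a (by omega)⟩
  set M := (Finset.Ico (a+1) b).filter (fun s => (a, s) ∈ F) with hM
  have hMne : M.Nonempty := ⟨a + 1, hne⟩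
  set t := M.max' hMne with ht
  have htM : t ∈ M := M.max'_mem hMne
  rw [hM, Finset.mem_filter, Finset.mem_Ico] at htM
  obtain ⟨⟨hta, htb⟩, hatF⟩ := htM
  have hmax : ∀ s, t < s → s < b → (a, s) ∉ F := by
    intro s hts hsb hsF
    have : s ≤ t := M.le_max' s (by rw [hM, Finset.mem_filter, Finset.mem_Ico]; exact ⟨⟨by omega, hsb⟩, hsF⟩)
    omega
  have hcross : ∀ i j : ℕ, (i, j) ∈ W F a b → ¬(i = a ∧ j = b) → j ≤ t ∨ t ≤ i := by
    intro i j hij hne'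
    rcases split_sub S hatF hmax hij with h | ⟨_, h2⟩ | ⟨h1, _⟩
    · exact absurd h hne'
    · exact Or.inl h2
    · exact Or.inr h1
  have hsub : W F a b ⊆ insert (a, b) (W F a t ∪ W F t b) := by
    intro p hp
    obtain ⟨i, j⟩ := p
    rcases split_sub S hatF hmax hp with ⟨h1, h2⟩ | ⟨h1, h2⟩ | ⟨h1, h2⟩
    · subst h1; subst h2; exact Finset.mem_insert_self _ _
    · exact Finset.mem_insert_of_mem (Finset.mem_union_left _ (by rw [mem_W]; exact ⟨(mem_W.mp hp).1, h1, h2⟩))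
    · exact Finset.mem_insert_of_mem (Finset.mem_union_right _ (by rw [mem_W]; exact ⟨(mem_W.mp hp).1, h1, h2⟩))
  have hsup : insert (a, b) (W F a t ∪ W F t b) ⊆ W F a b := by
    intro p hp
    rcases Finset.mem_insert.mp hp with h | h
    · subst h; rw [mem_W]; exact ⟨habF, le_rfl, le_rfl⟩
    · rcases Finset.mem_union.mp h with h | h
      · exact W_mono_left (by omega) h
      · exact W_mono_right (by omega) h
  have heq : W F a b = insert (a, b) (W F a t ∪ W F t b) := Finset.Subset.antisymm hsub hsup
  have hnotmem : (a, b) ∉ W F a t ∪ W F t b := by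
    intro h
    rcases Finset.mem_union.mp h with h | h <;> rw [mem_W] at h <;> omega
  have hdisj : Disjoint (W F a t) (W F t b) := by
    rw [Finset.disjoint_left]
    intro p hp hp'
    obtain ⟨i, j⟩ := p
    rw [mem_W] at hp hp'
    have := (S.mem_bound hp.1).1
    omega
  have hcardeq : (W F a b).card = (W F a t).card + (W F t b).card + 1 := by
    rw [heq, Finset.card_insert_of_notMem hnotmem, Finset.card_union_of_disjoint hdisj]
  have hL := W_card_le S (t - a) a t le_rfl (by omega)
  have hR := W_card_le S (b - t) t b le_rfl hbn
  have hfL : (W F a t).card = 2 * (t - a) - 1 := by omega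
  have hfR : (W F t b).card = 2 * (b - t) - 1 := by omega
  exact ⟨t, by omega, htb, hatF, full_mem S htb hbn hfR, hfL, hfR, hcross⟩

lemma fin4_card {p q r s : Fin 4} (h1 : p ≠ q) (h2 : p ≠ r) (h3 : p ≠ s) (h4 : q ≠ r)
    (h5 : q ≠ s) (h6 : r ≠ s) : ({p, q, r, s} : Finset (Fin 4)).card = 4 := by
  rw [Finset.card_insert_of_notMem (by simp [h1, h2, h3]),
    Finset.card_insert_of_notMem (by simp [h4, h5]),
    Finset.card_insert_of_notMem (by simp [h6]), Finset.card_singleton]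

lemma exists_fourth (x y w : Fin 4) : ∃ z : Fin 4, z ≠ x ∧ z ≠ y ∧ z ≠ w := by
  revert x y w; decide

section quad
variable {α : Type*} [DecidableEq α] (w x y z : α)

lemma quad2 : ({w, x, y, z} : Finset α) = {x, w, z, y} := by ext u; simp; tauto
lemma quad3 : ({w, x, y, z} : Finset α) = {x, y, z, w} := by ext u; simp; tauto
lemma quad4 : ({w, x, y, z} : Finset α) = {y, x, w, z} := by ext u; simp; tauto
lemma quad5 : ({w, x, y, z} : Finset α) = {y, z, w, x} := by ext u; simp; tauto
lemma quad6 : ({w, x, y, z} : Finset α) = {z, y, x, w} := by ext u; simp; tauto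
lemma quad7 : ({w, x, y, z} : Finset α) = {z, w, x, y} := by ext u; simp; tauto
lemma quad8 : ({w, x, y, z} : Finset α) = {w, z, y, x} := by ext u; simp; tauto

end quad

lemma colorRec (S : Setting n F) :
    ∀ d a b : ℕ, b - a ≤ d → a < b → b ≤ n - 1 →
    (W F a b).card = 2 * (b - a) - 1 →
    ∀ x y w : Fin 4, x ≠ y → x ≠ w → y ≠ w →
    ∃ c : ℕ → Fin 4,
      c a = x ∧ c b = y ∧
      (∀ i j : ℕ, (i, j) ∈ W F a b → c i ≠ c j) ∧
      (∀ u : ℕ, a < u → u < b → (a, u) ∈ F → (u, b) ∈ F → c u ≠ w) ∧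
      (∀ p q r s : ℕ, a ≤ p → p ≤ b → a ≤ q → q ≤ b → a ≤ r → r ≤ b → a ≤ s → s ≤ b →
        sF F p q → sF F q r → sF F r s → sF F s p → p ≠ r → q ≠ s →
        ({c p, c q, c r, c s} : Finset (Fin 4)).card = 4) := by
  intro d
  induction d with
  | zero => intro a b hd hab; omega
  | succ d ih =>
    intro a b hd hab hbn hfull x y w hxy hxw hyw
    by_cases hb1 : b = a + 1
    · -- base case : a single edge
      refine ⟨fun v => if v = a then x else y, by simp, by simp [show b ≠ a by omega], ?_, ?_, ?_⟩
      · intro i j hij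
        rw [mem_W] at hij
        have := (S.mem_bound hij.1).1
        have hia : i = a := by omega
        have hjb : j = b := by omega
        simp [hia, hjb, show b ≠ a by omega, hxy]
      · intro u h1 h2; omega
      · intro p q r s hp1 hp2 hq1 hq2 hr1 hr2 hs1 hs2 hpq hqr hrs hsp hpr hqs
        have := sF_ne S hpq
        have := sF_ne S hqr
        have := sF_ne S hrs
        have := sF_ne S hsp
        omega
    · -- inductive step
      have hb2 : a + 2 ≤ b := by omega
      obtain ⟨t, hat, htb, haF, htF, hfL, hfR, hcross⟩ := full_split S hb2 hbn hfull
      obtain ⟨z, hzx, hzy, hzw⟩ := exists_fourth x y w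
      obtain ⟨cL, hcLa, hcLt, propL, invL, rainL⟩ :=
        ih a t (by omega) hat (by omega) hfL x z y hzx.symm hxy hzy
      obtain ⟨cR, hcRt, hcRb, propR, invR, rainR⟩ :=
        ih t b (by omega) htb hbn hfR z y x hzy hzx (Ne.symm hxy)
      set c : ℕ → Fin 4 := fun v => if v ≤ t then cL v else cR v with hc
      have hcl : ∀ v, v ≤ t → c v = cL v := fun v hv => if_pos hv
      have hcr : ∀ v, t ≤ v → c v = cR v := by
        intro v hv
        rcases eq_or_lt_of_le hv with h | h
        · subst h; rw [hc]; simp [hcLt, hcRt]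
        · rw [hc]; simp [show ¬ v ≤ t by omega]
      have hca : c a = x := by rw [hcl a (by omega), hcLa]
      have hcb : c b = y := by rw [hcr b (by omega), hcRb]
      have hct : c t = z := by rw [hcl t le_rfl, hcLt]
      have hstrad : ∀ u v : ℕ, a ≤ u → v ≤ b → sF F u v → u < t → t < v → u = a ∧ v = b := by
        intro u v hau hvb hsf hut htv
        have hm : (u, v) ∈ F := sF_mem_of_lt S hsf (by omega)
        have hWm : (u, v) ∈ W F a b := mem_W.mpr ⟨hm, hau, hvb⟩
        by_contra hne
        rcases hcross u v hWm hne with h | h <;> omega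
      have core : ∀ r s : ℕ, a ≤ r → r ≤ b → a ≤ s → s ≤ b → sF F b r → sF F r s → sF F s a →
          a ≠ r → b ≠ s → ({c a, c b, c r, c s} : Finset (Fin 4)).card = 4 := by
        intro r s har1 har2 has1 has2 hbr hrs hsa hner hnes
        have hsne_a : s ≠ a := sF_ne S hsa
        have hrne_b : b ≠ r := sF_ne S hbr
        have hrt : t ≤ r := by
          by_contra h
          push_neg at h
          have := hstrad r b har1 le_rfl (sF_comm hbr) h htb
          exact hner this.1.symm
        have hst : s ≤ t := by
          by_contra h
          push_neg at h
          have := hstrad a s le_rfl has2 (sF_comm hsa) hat h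
          exact hnes this.2.symm
        have hrs_ne : r ≠ s := sF_ne S hrs
        have hcase : r = t ∨ s = t := by
          by_contra h
          push_neg at h
          have hs : s < t := by omega
          have hr : t < r := by omega
          have := hstrad s r has1 har2 (sF_comm hrs) hs hr
          exact hsne_a this.1
        rcases hcase with hrt' | hst'
        · -- r = t, s is the left apex
          have has' : a < s := by omega
          have hst'' : s < t := by omega
          have hasF : (a, s) ∈ F := sF_mem_of_lt S (sF_comm hsa) has'
          have hstF : (s, t) ∈ F := sF_mem_of_lt S (by rw [← hrt']; exact sF_comm hrs) hst''
          have h1 : cL s ≠ x := by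
            have := propL a s (mem_W.mpr ⟨hasF, le_rfl, by omega⟩)
            rw [hcLa] at this
            exact (Ne.symm this)
          have h2 : cL s ≠ z := by
            have := propL s t (mem_W.mpr ⟨hstF, by omega, le_rfl⟩)
            rwa [hcLt] at this
          have h3 : cL s ≠ y := invL s has' hst'' hasF hstF
          rw [hca, hcb, show c r = z from by rw [hrt', hct],
            show c s = cL s from hcl s (by omega)]
          exact fin4_card hxy (Ne.symm hzx) (Ne.symm h1) (Ne.symm hzy) (Ne.symm h3) (Ne.symm h2)
        · -- s = t, r is the right apex
          have htr : t < r := by omega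
          have hrb : r < b := by omega
          have htrF : (t, r) ∈ F := sF_mem_of_lt S (by rw [← hst']; exact sF_comm hrs) htr
          have hrbF : (r, b) ∈ F := sF_mem_of_lt S (sF_comm hbr) hrb
          have h1 : cR r ≠ z := by
            have := propR t r (mem_W.mpr ⟨htrF, le_rfl, by omega⟩)
            rw [hcRt] at this
            exact Ne.symm this
          have h2 : cR r ≠ y := by
            have := propR r b (mem_W.mpr ⟨hrbF, by omega, le_rfl⟩)
            rwa [hcRb] at this
          have h3 : cR r ≠ x := invR r htr hrb htrF hrbF
          rw [hca, hcb, show c r = cR r from hcr r (by omega),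
            show c s = z from by rw [hst', hct]]
          exact fin4_card hxy (Ne.symm h3) (Ne.symm hzx) (Ne.symm h2) (Ne.symm hzy) h1
      refine ⟨c, hca, hcb, ?_, ?_, ?_⟩
      · -- properness
        intro i j hij
        by_cases he : i = a ∧ j = b
        · rw [he.1, he.2, hca, hcb]; exact hxy
        · have hijF := (mem_W.mp hij).1
          have hbd := S.mem_bound hijF
          have hbw := mem_W.mp hij
          rcases hcross i j hij he with h | h
          · rw [hcl i (by omega), hcl j h]
            exact propL i j (mem_W.mpr ⟨hijF, hbw.2.1, h⟩)
          · rw [hcr i h, hcr j (by omega)]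
            exact propR i j (mem_W.mpr ⟨hijF, h, hbw.2.2⟩)
      · -- invariant
        intro u hau hub hauF hubF
        have h1 : u ≤ t := by
          rcases hcross a u (mem_W.mpr ⟨hauF, le_rfl, by omega⟩) (by omega) with h | h <;> omega
        have h2 : t ≤ u := by
          rcases hcross u b (mem_W.mpr ⟨hubF, by omega, le_rfl⟩) (by omega) with h | h <;> omega
        have : u = t := by omega
        rw [this, hct]
        exact hzw
      · -- rainbow
        intro p q r s hp1 hp2 hq1 hq2 hr1 hr2 hs1 hs2 hpq hqr hrs hsp hpr hqs
        by_cases hallL : p ≤ t ∧ q ≤ t ∧ r ≤ t ∧ s ≤ t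
        · obtain ⟨h1, h2, h3, h4⟩ := hallL
          rw [hcl p h1, hcl q h2, hcl r h3, hcl s h4]
          exact rainL p q r s hp1 h1 hq1 h2 hr1 h3 hs1 h4 hpq hqr hrs hsp hpr hqs
        by_cases hallR : t ≤ p ∧ t ≤ q ∧ t ≤ r ∧ t ≤ s
        · obtain ⟨h1, h2, h3, h4⟩ := hallR
          rw [hcr p h1, hcr q h2, hcr r h3, hcr s h4]
          exact rainR p q r s h1 hp2 h2 hq2 h3 hr2 h4 hs2 hpq hqr hrs hsp hpr hqs
        have h8 : (p < t ∧ t < q) ∨ (q < t ∧ t < p) ∨ (q < t ∧ t < r) ∨ (r < t ∧ t < q) ∨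
            (r < t ∧ t < s) ∨ (s < t ∧ t < r) ∨ (s < t ∧ t < p) ∨ (p < t ∧ t < s) := by
          omega
        rcases h8 with ⟨h1, h2⟩ | ⟨h1, h2⟩ | ⟨h1, h2⟩ | ⟨h1, h2⟩ | ⟨h1, h2⟩ | ⟨h1, h2⟩ | ⟨h1, h2⟩ | ⟨h1, h2⟩
        · obtain ⟨hpa, hqb⟩ := hstrad p q hp1 hq2 hpq h1 h2
          rw [hpa, hqb]
          exact core r s hr1 hr2 hs1 hs2 (by rw [← hqb]; exact hqr) hrs
            (by rw [← hpa]; exact hsp) (by omega) (by omega)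
        · obtain ⟨hqa, hpb⟩ := hstrad q p hq1 hp2 (sF_comm hpq) h1 h2
          rw [hqa, hpb]
          rw [quad2]
          exact core s r hs1 hs2 hr1 hr2 (by rw [← hpb]; exact sF_comm hsp) (sF_comm hrs)
            (by rw [← hqa]; exact sF_comm hqr) (by omega) (by omega)
        · obtain ⟨hqa, hrb⟩ := hstrad q r hq1 hr2 hqr h1 h2
          rw [hqa, hrb]
          rw [quad3]
          exact core s p hs1 hs2 hp1 hp2 (by rw [← hrb]; exact hrs) hsp
            (by rw [← hqa]; exact hpq) (by omega) (by omega)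
        · obtain ⟨hra, hqb⟩ := hstrad r q hr1 hq2 (sF_comm hqr) h1 h2
          rw [hra, hqb]
          rw [quad4]
          exact core p s hp1 hp2 hs1 hs2 (by rw [← hqb]; exact sF_comm hpq) (sF_comm hsp)
            (by rw [← hra]; exact sF_comm hrs) (by omega) (by omega)
        · obtain ⟨hra, hsb⟩ := hstrad r s hr1 hs2 hrs h1 h2
          rw [hra, hsb]
          rw [quad5]
          exact core p q hp1 hp2 hq1 hq2 (by rw [← hsb]; exact hsp) hpq
            (by rw [← hra]; exact hqr) (by omega) (by omega)
        · obtain ⟨hsa, hrb⟩ := hstrad s r hs1 hr2 (sF_comm hrs) h1 h2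
          rw [hsa, hrb]
          rw [quad6]
          exact core q p hq1 hq2 hp1 hp2 (by rw [← hrb]; exact sF_comm hqr) (sF_comm hpq)
            (by rw [← hsa]; exact sF_comm hsp) (by omega) (by omega)
        · obtain ⟨hsa, hpb⟩ := hstrad s p hs1 hp2 hsp h1 h2
          rw [hsa, hpb]
          rw [quad7]
          exact core q r hq1 hq2 hr1 hr2 (by rw [← hpb]; exact hpq) hqr
            (by rw [← hsa]; exact hrs) (by omega) (by omega)
        · obtain ⟨hpa, hsb⟩ := hstrad p s hp1 hs2 (sF_comm hsp) h1 h2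
          rw [hpa, hsb]
          rw [quad8]
          exact core r q hr1 hr2 hq1 hq2 (by rw [← hsb]; exact sF_comm hrs) (sF_comm hqr)
            (by rw [← hpa]; exact sF_comm hpq) (by omega) (by omega)

lemma finRotate_eq_of_lt {N : ℕ} {i : Fin N} (h : (i : ℕ) + 1 < N) :
    finRotate N i = ⟨(i : ℕ) + 1, h⟩ := by
  cases N with
  | zero => exact i.elim0
  | succ m =>
    rw [finRotate_succ_apply]
    apply Fin.ext
    rw [Fin.val_add_one]
    have hne : i ≠ Fin.last m := by
      intro he
      rw [he] at h
      simp [Fin.last] at h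
    simp [hne]

end MopAux

theorem mop_key {V : Type*} [Fintype V] [DecidableEq V] (G : SimpleGraph V) (n : ℕ)
    (f : Fin n ≃ V) (hsmall : 2 ≤ n)
    (h1 : ∀ i : Fin n, G.Adj (f i) (f (finRotate n i)))
    (h2 : ∀ i j k l : Fin n, G.Adj (f i) (f j) → G.Adj (f k) (f l) →
      ¬ (i < k ∧ k < j ∧ j < l))
    (h3 : G.edgeSet.ncard = 2 * n - 3) :
    ∃ c : V → Fin 4, (∀ u v : V, G.Adj u v → c u ≠ c v) ∧
      ∀ a b d e : V, G.Adj a b → G.Adj b d → G.Adj d e → G.Adj e a → a ≠ d → b ≠ e →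
        ({c a, c b, c d, c e} : Finset (Fin 4)).card = 4 := by
  classical
set P : Finset (Fin n × Fin n) :=
  Finset.univ.filter (fun q => q.1 < q.2 ∧ G.Adj (f q.1) (f q.2)) with hP
set F : Finset (ℕ × ℕ) := P.image (fun q => ((q.1 : ℕ), (q.2 : ℕ))) with hF
have memF : ∀ i j : ℕ, (i, j) ∈ F ↔
    ∃ (hi : i < n) (hj : j < n), i < j ∧ G.Adj (f ⟨i, hi⟩) (f ⟨j, hj⟩) := by
  intro i j
  constructor
  · intro h
    rw [hF, Finset.mem_image] at h
    obtain ⟨q, hq, hqe⟩ := h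
    rw [hP, Finset.mem_filter] at hq
    obtain ⟨-, hlt, hadj⟩ := hq
    obtain ⟨e1, e2⟩ := Prod.mk.injEq _ _ _ _ ▸ hqe
    subst e1; subst e2
    exact ⟨q.1.isLt, q.2.isLt, hlt, by simpa [Fin.eta] using hadj⟩
  · rintro ⟨hi, hj, hlt, hadj⟩
    rw [hF, Finset.mem_image]
    refine ⟨(⟨i, hi⟩, ⟨j, hj⟩), ?_, rfl⟩
    rw [hP, Finset.mem_filter]
    exact ⟨Finset.mem_univ _, Fin.mk_lt_mk.mpr hlt, hadj⟩
have S : MopAux.Setting n F := by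
  refine ⟨hsmall, ?_, ?_, ?_⟩
  · intro i j h
    rw [memF] at h
    obtain ⟨hi, hj, hlt, -⟩ := h
    exact ⟨hlt, hj⟩
  · intro i hi
    have hadj := h1 ⟨i, by omega⟩
    rw [MopAux.finRotate_eq_of_lt (by simpa using hi)] at hadj
    exact (memF i (i+1)).mpr ⟨by omega, hi, by omega, hadj⟩
  · intro i j k l hij hkl hc
    rw [memF] at hij hkl
    obtain ⟨hi, hj, hij', hadj1⟩ := hij
    obtain ⟨hk, hl, hkl', hadj2⟩ := hkl
    exact h2 ⟨i, hi⟩ ⟨j, hj⟩ ⟨k, hk⟩ ⟨l, hl⟩ hadj1 hadj2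
      ⟨Fin.mk_lt_mk.mpr hc.1, Fin.mk_lt_mk.mpr hc.2.1, Fin.mk_lt_mk.mpr hc.2.2⟩
have hPcard : P.card = G.edgeFinset.card := by
  refine Finset.card_bij (fun q _ => s(f q.1, f q.2)) ?_ ?_ ?_
  · intro q hq
    rw [hP, Finset.mem_filter] at hq
    rw [SimpleGraph.mem_edgeFinset, SimpleGraph.mem_edgeSet]
    exact hq.2.2
  · intro q1 hq1 q2 hq2 heq
    rw [hP, Finset.mem_filter] at hq1 hq2
    rcases Sym2.eq_iff.mp heq with ⟨ea, eb⟩ | ⟨ea, eb⟩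
    · exact Prod.ext (f.injective ea) (f.injective eb)
    · exfalso
      have e1 : q1.1 = q2.2 := f.injective ea
      have e2 : q1.2 = q2.1 := f.injective eb
      have l1 := Fin.lt_def.mp hq1.2.1
      have l2 := Fin.lt_def.mp hq2.2.1
      have v1 : (q1.1 : ℕ) = q2.2 := congrArg Fin.val e1
      have v2 : (q1.2 : ℕ) = q2.1 := congrArg Fin.val e2
      omega
  · intro e he
    induction e using Sym2.ind with
    | _ u v =>
      rw [SimpleGraph.mem_edgeFinset, SimpleGraph.mem_edgeSet] at he
      rcases lt_trichotomy (f.symm u) (f.symm v) with h | h | h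
      · refine ⟨(f.symm u, f.symm v), ?_, by simp⟩
        rw [hP, Finset.mem_filter]
        exact ⟨Finset.mem_univ _, h, by simpa using he⟩
      · exact absurd (f.symm.injective h) he.ne
      · refine ⟨(f.symm v, f.symm u), ?_, ?_⟩
        · rw [hP, Finset.mem_filter]
          exact ⟨Finset.mem_univ _, h, by simpa using he.symm⟩
        · simp [Sym2.eq_swap]
have hFcard : F.card = 2 * n - 3 := by
  rw [hF, Finset.card_image_of_injective _ (fun q r hqr => by
    obtain ⟨e1, e2⟩ := Prod.mk.injEq _ _ _ _ ▸ hqr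
    exact Prod.ext (Fin.val_injective e1) (Fin.val_injective e2))]
  rw [hPcard, ← Set.ncard_coe_finset, SimpleGraph.coe_edgeFinset]
  exact h3
have hW : MopAux.W F 0 (n-1) = F := by
  ext p
  obtain ⟨i, j⟩ := p
  rw [MopAux.mem_W]
  constructor
  · exact fun h => h.1
  · intro h
    have := (S.mem_bound h).2
    exact ⟨h, Nat.zero_le _, by omega⟩
have hfull : (MopAux.W F 0 (n-1)).card = 2 * (n - 1 - 0) - 1 := by
  rw [hW, hFcard]
  omega
obtain ⟨c', hc0, hc1, prop', inv', rain'⟩ :=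
  MopAux.colorRec S (n-1) 0 (n-1) le_rfl (by omega) le_rfl hfull 0 1 2
    (by decide) (by decide) (by decide)
have hsF : ∀ u v : V, G.Adj u v →
    MopAux.sF F ((f.symm u : Fin n) : ℕ) ((f.symm v : Fin n) : ℕ) := by
  intro u v huv
  have hne : ((f.symm u : Fin n) : ℕ) ≠ ((f.symm v : Fin n) : ℕ) := by
    intro h
    exact huv.ne (by simpa using congrArg f (Fin.val_injective h : f.symm u = f.symm v))
  have hadj1 : G.Adj (f (f.symm u)) (f (f.symm v)) := by simpa using huv
  rcases lt_or_gt_of_ne hne with h | h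
  · exact Or.inl ((memF _ _).mpr ⟨(f.symm u).isLt, (f.symm v).isLt, h, by
      simpa [Fin.eta] using hadj1⟩)
  · exact Or.inr ((memF _ _).mpr ⟨(f.symm v).isLt, (f.symm u).isLt, h, by
      simpa [Fin.eta] using hadj1.symm⟩)
have hneidx : ∀ u v : V, u ≠ v → ((f.symm u : Fin n) : ℕ) ≠ ((f.symm v : Fin n) : ℕ) := by
  intro u v huv h
  exact huv (by simpa using congrArg f (Fin.val_injective h : f.symm u = f.symm v))
refine ⟨fun v => c' ((f.symm v : Fin n) : ℕ), ?_, ?_⟩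
· intro u v huv
  rcases hsF u v huv with h | h
  · exact prop' _ _ (MopAux.mem_W.mpr ⟨h, Nat.zero_le _, by
      have := (S.mem_bound h).2; omega⟩)
  · exact (prop' _ _ (MopAux.mem_W.mpr ⟨h, Nat.zero_le _, by
      have := (S.mem_bound h).2; omega⟩)).symm
· intro a b d e hab hbd hde hea had hbe
  have hb : ∀ v : V, ((f.symm v : Fin n) : ℕ) ≤ n - 1 := by
    intro v
    have := (f.symm v).isLt
    omega
  exact rain' _ _ _ _ (Nat.zero_le _) (hb a) (Nat.zero_le _) (hb b) (Nat.zero_le _) (hb d)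
    (Nat.zero_le _) (hb e) (hsF a b hab) (hsF b d hbd) (hsF d e hde) (hsF e a hea)
    (hneidx a d had) (hneidx b e hbe)



theorem mop_four_coloring {V : Type*} [Fintype V] [DecidableEq V]
    (G : SimpleGraph V) (hmop : IsMaximalOuterplanar G) :
    ∃ c : V → Fin 4, (∀ u v : V, G.Adj u v → c u ≠ c v) ∧
      ∀ a b d e : V, G.Adj a b → G.Adj b d → G.Adj d e → G.Adj e a → a ≠ d → b ≠ e →
        ({c a, c b, c d, c e} : Finset (Fin 4)).card = 4 := by
  classical
  obtain ⟨f, h1, h2, h3⟩ := hmop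
  by_cases hsmall : Fintype.card V < 2
  · rcases (by omega : Fintype.card V = 0 ∨ Fintype.card V = 1) with h0 | h0
    · have hVe : IsEmpty V := Fintype.card_eq_zero_iff.mp h0
      exact ⟨fun v => isEmptyElim v, fun u v h => isEmptyElim u, fun a => isEmptyElim a⟩
    · exfalso
      have hadj := h1 ⟨0, by omega⟩
      have heq : finRotate (Fintype.card V) ⟨0, by omega⟩ = ⟨0, by omega⟩ := by
        apply Fin.ext
        have := (finRotate (Fintype.card V) ⟨0, by omega⟩).isLt
        omega
      rw [heq] at hadj
      exact G.loopless.irrefl _ hadj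
  · exact mop_key G (Fintype.card V) f (by omega) h1 h2 h3
end

section
/- Let G be a connected biconvex bipartite graph. Then γ(G) ≤ 2 ρ(G). -/
open SimpleGraph Finset

/-- `G` is biconvex with parts `X`, `Y`: both parts admit orderings in which every
neighborhood of a vertex of the other part is an interval of consecutive vertices. -/
def IsBiconvexWith {V : Type*} (G : SimpleGraph V) (X Y : Finset V) : Prop :=
  IsBipartitionWith G X Y ∧
    (∃ f : V → ℕ, Set.InjOn f X ∧
      ∀ y ∈ Y, ∀ a ∈ X, ∀ b ∈ X, ∀ c ∈ X,
        f a ≤ f b → f b ≤ f c → G.Adj y a → G.Adj y c → G.Adj y b) ∧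
    (∃ g : V → ℕ, Set.InjOn g Y ∧
      ∀ x ∈ X, ∀ a ∈ Y, ∀ b ∈ Y, ∀ c ∈ Y,
        g a ≤ g b → g b ≤ g c → G.Adj x a → G.Adj x c → G.Adj x b)

/-- Greedy sweep: for a family `F` of vertices of one side whose neighborhoods are
convex w.r.t. `g`, there is a hitting set `H` on the other side dominating all of `F`,
together with a subfamily `P ⊆ F` of pairwise "no common neighbor" vertices
with `H.card ≤ P.card`. -/
lemma sweep_aux {V : Type*} [Fintype V] [DecidableEq V] (G : SimpleGraph V)
    (Xp Yp : Finset V) (hdisj : Disjoint Xp Yp)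
    (hadj : ∀ ⦃u v : V⦄, G.Adj u v → (u ∈ Xp ∧ v ∈ Yp) ∨ (u ∈ Yp ∧ v ∈ Xp))
    (g : V → ℕ)
    (hconv : ∀ x ∈ Xp, ∀ a ∈ Yp, ∀ b ∈ Yp, ∀ c ∈ Yp,
      g a ≤ g b → g b ≤ g c → G.Adj x a → G.Adj x c → G.Adj x b) :
    ∀ (n : ℕ) (F : Finset V), F.card ≤ n → F ⊆ Xp → (∀ x ∈ F, ∃ y, G.Adj x y) →
    ∃ H P : Finset V, H ⊆ Yp ∧ P ⊆ F ∧
      (∀ x ∈ F, ∃ y ∈ H, G.Adj x y) ∧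
      (∀ u ∈ P, ∀ v ∈ P, u ≠ v → ∀ z, G.Adj u z → ¬ G.Adj v z) ∧
      H.card ≤ P.card := by
  classical
  intro n
  induction n with
  | zero =>
    intro F hcard _ _
    have hF : F = ∅ := Finset.card_eq_zero.mp (Nat.le_zero.mp hcard)
    subst hF
    exact ⟨∅, ∅, by simp, by simp, by simp, by simp, le_rfl⟩
  | succ n ih =>
    intro F hcard hFX hne
    rcases Finset.eq_empty_or_nonempty F with rfl | hFne
    · exact ⟨∅, ∅, by simp, by simp, by simp, by simp, le_rfl⟩
    -- neighborhood finsets and right endpoints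
    set Nx : V → Finset V := fun x => Yp.filter (fun y => G.Adj x y) with hNxdef
    have hNxne : ∀ x ∈ F, (Nx x).Nonempty := by
      intro x hx
      obtain ⟨y, hy⟩ := hne x hx
      have hyY : y ∈ Yp := by
        rcases hadj hy with ⟨_, h2⟩ | ⟨h1, _⟩
        · exact h2
        · exact absurd (hFX hx) (Finset.disjoint_right.mp hdisj h1)
      exact ⟨y, Finset.mem_filter.mpr ⟨hyY, hy⟩⟩
    set r : V → ℕ := fun x => (Nx x).sup g with hrdef
    obtain ⟨x₀, hx₀F, hx₀min⟩ := Finset.exists_min_image F r hFne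
    obtain ⟨y₀, hy₀mem, hy₀sup⟩ := Finset.exists_mem_eq_sup (Nx x₀) (hNxne x₀ hx₀F) g
    have hy₀Y : y₀ ∈ Yp := (Finset.mem_filter.mp hy₀mem).1
    have hx₀y₀ : G.Adj x₀ y₀ := (Finset.mem_filter.mp hy₀mem).2
    set F' : Finset V := F.filter (fun x => ¬ G.Adj x y₀) with hF'def
    have hF'F : F' ⊆ F := Finset.filter_subset _ _
    have hx₀notF' : x₀ ∉ F' := by
      intro h
      exact (Finset.mem_filter.mp h).2 hx₀y₀
    have hF'card : F'.card ≤ n := by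
      have : F' ⊂ F := ⟨hF'F, fun h => hx₀notF' (h hx₀F)⟩
      have := Finset.card_lt_card this
      omega
    -- key disjointness claim
    have hkey : ∀ x ∈ F', ∀ z, G.Adj x₀ z → ¬ G.Adj x z := by
      intro x hxF' z hz hxz
      have hxF : x ∈ F := hF'F hxF'
      have hzY : z ∈ Yp := by
        rcases hadj hz with ⟨_, h2⟩ | ⟨h1, _⟩
        · exact h2
        · exact absurd (hFX hx₀F) (Finset.disjoint_right.mp hdisj h1)
      have hzNx₀ : z ∈ Nx x₀ := Finset.mem_filter.mpr ⟨hzY, hz⟩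
      have hzNx : z ∈ Nx x := Finset.mem_filter.mpr ⟨hzY, hxz⟩
      have hgz : g z ≤ g y₀ := by
        have h1 : g z ≤ (Nx x₀).sup g := Finset.le_sup hzNx₀
        rw [hy₀sup] at h1
        exact h1
      obtain ⟨w, hwmem, hwsup⟩ := Finset.exists_mem_eq_sup (Nx x) ⟨z, hzNx⟩ g
      have hwY : w ∈ Yp := (Finset.mem_filter.mp hwmem).1
      have hxw : G.Adj x w := (Finset.mem_filter.mp hwmem).2
      have hgw : g y₀ ≤ g w := by
        have h1 : (Nx x₀).sup g ≤ (Nx x).sup g := hx₀min x hxF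
        rw [hy₀sup, hwsup] at h1
        exact h1
      have : G.Adj x y₀ :=
        hconv x (hFX hxF) z hzY y₀ hy₀Y w hwY hgz hgw hxz hxw
      exact (Finset.mem_filter.mp hxF').2 this
    obtain ⟨H', P', hH'Y, hP'F', hdom', hpack', hcard'⟩ :=
      ih F' hF'card (hF'F.trans hFX) (fun x hx => hne x (hF'F hx))
    refine ⟨insert y₀ H', insert x₀ P', ?_, ?_, ?_, ?_, ?_⟩
    · exact Finset.insert_subset hy₀Y hH'Y
    · exact Finset.insert_subset hx₀F (hP'F'.trans hF'F)
    · intro x hx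
      by_cases h : G.Adj x y₀
      · exact ⟨y₀, Finset.mem_insert_self _ _, h⟩
      · obtain ⟨y, hy, hady⟩ := hdom' x (Finset.mem_filter.mpr ⟨hx, h⟩)
        exact ⟨y, Finset.mem_insert_of_mem hy, hady⟩
    · intro u hu v hv huv z hz1 hz2
      rcases Finset.mem_insert.mp hu with rfl | hu'
      · rcases Finset.mem_insert.mp hv with rfl | hv'
        · exact huv rfl
        · exact hkey v (hP'F' hv') z hz1 hz2
      · rcases Finset.mem_insert.mp hv with rfl | hv'
        · exact hkey u (hP'F' hu') z hz2 hz1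
        · exact hpack' u hu' v hv' huv z hz1 hz2
    · have h1 : (insert y₀ H').card ≤ H'.card + 1 := Finset.card_insert_le _ _
      have h2 : (insert x₀ P').card = P'.card + 1 :=
        Finset.card_insert_of_notMem (fun h => hx₀notF' (hP'F' h))
      omega

lemma packing_of_side {V : Type*} [Fintype V] [DecidableEq V] (G : SimpleGraph V)
    (Xp Yp : Finset V) (hdisj : Disjoint Xp Yp)
    (hadj : ∀ ⦃u v : V⦄, G.Adj u v → (u ∈ Xp ∧ v ∈ Yp) ∨ (u ∈ Yp ∧ v ∈ Xp))
    (P : Finset V) (hP : P ⊆ Xp)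
    (h : ∀ u ∈ P, ∀ v ∈ P, u ≠ v → ∀ z, G.Adj u z → ¬ G.Adj v z) :
    IsPackingSet G P := by
  have noXX : ∀ {p q : V}, p ∈ Xp → q ∈ Xp → ¬ G.Adj p q := by
    intro p q hp hq hpq
    rcases hadj hpq with ⟨_, h2⟩ | ⟨h1, _⟩
    · exact Finset.disjoint_left.mp hdisj hq h2
    · exact Finset.disjoint_left.mp hdisj hp h1
  intro u hu v hv huv
  rw [Set.disjoint_left]
  rintro a ha hb
  simp only [Set.mem_insert_iff, SimpleGraph.mem_neighborSet] at ha hb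
  rcases ha with rfl | ha
  · rcases hb with rfl | hb
    · exact huv rfl
    · exact noXX (hP hv) (hP hu) hb
  · rcases hb with rfl | hb
    · exact noXX (hP hu) (hP hv) ha
    · exact h u hu v hv huv a ha hb

theorem biconvex_domination_le_two_packing {V : Type*} [Fintype V] [DecidableEq V]
    (G : SimpleGraph V) (hconn : G.Connected) (X Y : Finset V)
    (hbc : IsBiconvexWith G X Y) :
    domNum G ≤ 2 * packNum G := by
  classical
  obtain ⟨⟨hdisj, hcover, hadj⟩, ⟨f, hfinj, hfconv⟩, ⟨g, hginj, hgconv⟩⟩ := hbc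
  have hbdd : BddAbove {n : ℕ | ∃ Y' : Finset V, IsPackingSet G Y' ∧ Y'.card = n} := by
    refine ⟨Fintype.card V, ?_⟩
    rintro n ⟨S, _, rfl⟩
    simpa using Finset.card_le_univ S
  by_cases hiso : ∀ v : V, ∃ w, G.Adj v w
  · -- every vertex has a neighbor
    obtain ⟨HY, PX, hHYY, hPXX, hdomX, hpackX, hcardX⟩ :=
      sweep_aux G X Y hdisj hadj g hgconv X.card X le_rfl subset_rfl (fun x _ => hiso x)
    have hadj' : ∀ ⦃u v : V⦄, G.Adj u v → (u ∈ Y ∧ v ∈ X) ∨ (u ∈ X ∧ v ∈ Y) :=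
      fun u v h => (hadj h).symm
    obtain ⟨HX, PY, hHXX, hPYY, hdomY, hpackY, hcardY⟩ :=
      sweep_aux G Y X hdisj.symm hadj' f hfconv Y.card Y le_rfl subset_rfl (fun x _ => hiso x)
    -- D = HX ∪ HY dominates
    have hD : IsDominatingSet G (HX ∪ HY) := by
      intro v
      rcases hcover v with hvX | hvY
      · obtain ⟨y, hy, hady⟩ := hdomX v hvX
        exact Or.inr ⟨y, Finset.mem_union_right _ hy, hady.symm⟩
      · obtain ⟨y, hy, hady⟩ := hdomY v hvY
        exact Or.inr ⟨y, Finset.mem_union_left _ hy, hady.symm⟩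
    have hdom_le : domNum G ≤ (HX ∪ HY).card :=
      Nat.sInf_le ⟨HX ∪ HY, hD, rfl⟩
    have hPXpack : IsPackingSet G PX :=
      packing_of_side G X Y hdisj hadj PX hPXX hpackX
    have hPYpack : IsPackingSet G PY :=
      packing_of_side G Y X hdisj.symm hadj' PY hPYY hpackY
    have h1 : PX.card ≤ packNum G := le_csSup hbdd ⟨PX, hPXpack, rfl⟩
    have h2 : PY.card ≤ packNum G := le_csSup hbdd ⟨PY, hPYpack, rfl⟩
    have h3 : (HX ∪ HY).card ≤ HX.card + HY.card := Finset.card_union_le _ _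
    omega
  · -- there is an isolated vertex, so V is a single point
    push_neg at hiso
    obtain ⟨v, hv⟩ := hiso
    have hall : ∀ w : V, w = v := by
      intro w
      obtain ⟨p⟩ := hconn.preconnected v w
      cases p with
      | nil => rfl
      | cons h _ => exact absurd h (hv _)
    have hdom_le : domNum G ≤ 1 := by
      refine Nat.sInf_le ⟨{v}, ?_, Finset.card_singleton v⟩
      intro u
      exact Or.inl (by simp [hall u])
    have hpack_ge : 1 ≤ packNum G := by
      refine le_csSup hbdd ⟨{v}, ?_, Finset.card_singleton v⟩
      intro u hu w hw huw
      simp only [Finset.mem_singleton] at hu hw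
      subst hu; subst hw
      exact absurd rfl huw
    omega
end

section
/- The sun graph G (the graph obtained from a triangle a b c by adding three new vertices a', b', c' with a' adjacent to b and c, b' adjacent to a and c, and c' adjacent to a and b) is maximal outerplanar and satisfies γ(G) = 2 and ρ(G) = 1, i.e., γ(G) = 2 ρ(G). -/
open SimpleGraph Finset

/-- The sun graph: a triangle `a b c` (vertices `0, 1, 2`) together with `a' = 3`
adjacent to `b, c`, `b' = 4` adjacent to `a, c`, and `c' = 5` adjacent to `a, b`. -/
def sunGraph : SimpleGraph (Fin 6) :=
  SimpleGraph.fromRel (fun u v =>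
    ((u.val, v.val) : ℕ × ℕ) ∈
      [(0, 1), (1, 2), (0, 2), (3, 1), (3, 2), (4, 0), (4, 2), (5, 0), (5, 1)])

instance : DecidableRel sunGraph.Adj :=
  fun u v => decidable_of_iff _ (SimpleGraph.fromRel_adj _ u v).symm

instance (u v : Fin 6) : Decidable (v ∈ sunGraph.neighborSet u) :=
  inferInstanceAs (Decidable (sunGraph.Adj u v))

instance (s t : Set (Fin 6)) [DecidablePred (· ∈ s)] [DecidablePred (· ∈ t)] :
    Decidable (Disjoint s t) :=
  decidable_of_iff (∀ a ∈ s, a ∉ t) Set.disjoint_left.symm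

instance (X : Finset (Fin 6)) : Decidable (IsDominatingSet sunGraph X) :=
  inferInstanceAs (Decidable (∀ _, _ ∨ _))

instance (Y : Finset (Fin 6)) : Decidable (IsPackingSet sunGraph Y) := by
  unfold IsPackingSet; infer_instance

/-- The Hamiltonian ordering `0, 5, 1, 3, 2, 4` of the sun graph. -/
def sunPerm : Fin (Fintype.card (Fin 6)) ≃ Fin 6 :=
  ⟨![0, 5, 1, 3, 2, 4], ![0, 2, 4, 3, 5, 1], by unfold Function.LeftInverse; decide,
    by unfold Function.RightInverse Function.LeftInverse; decide⟩

theorem sunGraph_domination_packing :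
    IsMaximalOuterplanar sunGraph ∧ domNum sunGraph = 2 ∧ packNum sunGraph = 1 ∧
      domNum sunGraph = 2 * packNum sunGraph := by
  have hdom2 : (2 : ℕ) ∈ {n : ℕ | ∃ X : Finset (Fin 6),
      IsDominatingSet sunGraph X ∧ X.card = n} :=
    ⟨{0, 3}, by decide, by decide⟩
  have hdomlb : ∀ n ∈ {n : ℕ | ∃ X : Finset (Fin 6),
      IsDominatingSet sunGraph X ∧ X.card = n}, 2 ≤ n := by
    rintro n ⟨X, hX, rfl⟩
    revert hX
    revert X
    decide
  have hdom : domNum sunGraph = 2 :=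
    le_antisymm (Nat.sInf_le hdom2) (le_csInf ⟨2, hdom2⟩ hdomlb)
  have hpack1 : (1 : ℕ) ∈ {n : ℕ | ∃ Y : Finset (Fin 6),
      IsPackingSet sunGraph Y ∧ Y.card = n} :=
    ⟨{0}, by decide, by decide⟩
  have hpackub : ∀ n ∈ {n : ℕ | ∃ Y : Finset (Fin 6),
      IsPackingSet sunGraph Y ∧ Y.card = n}, n ≤ 1 := by
    rintro n ⟨Y, hY, rfl⟩
    revert hY
    revert Y
    decide
  have hpack : packNum sunGraph = 1 :=
    le_antisymm (csSup_le ⟨1, hpack1⟩ hpackub) (le_csSup ⟨1, hpackub⟩ hpack1)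
  refine ⟨⟨sunPerm, by decide, by decide, ?_⟩, hdom, hpack, by rw [hdom, hpack]⟩
  rw [Set.ncard_eq_toFinset_card']
  decide
end
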